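/- arXiv:0706.3131 — 7 statements merged into one kernel-verified Lean document; each statement's English description precedes it below -/
import Mathlib

section
/- Let G be the group defined by a finite L-presentation ⟨S ∣ Q ∣ Φ ∣ R⟩ and let n ∈ ℕ. Let H = F/γₙ(F) with natural epimorphism ε : F → H; since γₙ(F) is invariant under every endomorphism of F, each φ ∈ Φ* induces an endomorphism φ̃ of H satisfying φ̃ ∘ ε = ε ∘ φ. Then G/γₙ(G) ≅ H/(U_G)^H, where U_G = ⟨ε(q), φ̃(ε(r)) : q ∈ Q, r ∈ R, φ ∈ Φ*⟩ and (U_G)^H denotes the normal closure of U_G in H. -/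
/-- The lower central series maps onto the lower central series under a
surjective homomorphism. -/
theorem lcs_map_eq_of_surjective {G H : Type*} [Group G] [Group H] (f : G →* H)
    (hf : Function.Surjective f) (n : ℕ) :
    (Subgroup.lowerCentralSeries (⊤ : Subgroup G) n).map f = Subgroup.lowerCentralSeries (⊤ : Subgroup H) n := by
  induction n with
  | zero => simpa using Subgroup.map_top_of_surjective f hf
  | succ n ih =>
    show Subgroup.map f ⁅Subgroup.lowerCentralSeries (⊤ : Subgroup G) n, (⊤ : Subgroup G)⁆ = _
    rw [Subgroup.map_commutator, ih, Subgroup.map_top_of_surjective f hf]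
    rfl

/-- Let `G = F/K` be defined by a finite `L`-presentation
`⟨S ∣ Q ∣ Φ ∣ R⟩` and let `n ∈ ℕ`.  Let `H = F/γₙ(F)` (here we index the
lower central series so that `lowerCentralSeries F n = γ_{n+1}(F)`; the
statement is made for all `n`, i.e. for every term `γₙ` with `n ≥ 1`) with
natural epimorphism `ε : F → H`.  Each `φ ∈ Φ*` induces an endomorphism
`φ̃` of `H` with `φ̃ ∘ ε = ε ∘ φ`.  Then `G/γₙ(G) ≅ H/(U_G)^H`, where
`U_G = ⟨ε(q), φ̃(ε(r)) : q ∈ Q, r ∈ R, φ ∈ Φ*⟩`. -/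
theorem lpres_nilpotent_quotient_I
    (m : ℕ) (Q R : Set (FreeGroup (Fin m)))
    (Φ : Set (Monoid.End (FreeGroup (Fin m))))
    (K : Subgroup (FreeGroup (Fin m))) [K.Normal]
    (hK : K = Subgroup.normalClosure
      (Q ∪ ⋃ φ ∈ Submonoid.closure Φ, ⇑φ '' R))
    (n : ℕ)
    -- the natural epimorphism `ε : F → H = F/γ_{n+1}(F)`
    (ε : FreeGroup (Fin m) →*
      (FreeGroup (Fin m) ⧸ Subgroup.lowerCentralSeries (⊤ : Subgroup (FreeGroup (Fin m))) n))
    (hε : ε = QuotientGroup.mk' (Subgroup.lowerCentralSeries (⊤ : Subgroup (FreeGroup (Fin m))) n))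
    -- `φ ↦ φ̃`, the induced endomorphism of `H`, satisfying `φ̃ ∘ ε = ε ∘ φ`
    (ind : Monoid.End (FreeGroup (Fin m)) →
      Monoid.End (FreeGroup (Fin m) ⧸ Subgroup.lowerCentralSeries (⊤ : Subgroup (FreeGroup (Fin m))) n))
    (hind : ∀ φ ∈ Submonoid.closure Φ, ∀ x : FreeGroup (Fin m),
      ind φ (ε x) = ε (φ x))
    -- the subgroup `U_G` of `H`
    (U : Subgroup (FreeGroup (Fin m) ⧸ Subgroup.lowerCentralSeries (⊤ : Subgroup (FreeGroup (Fin m))) n))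
    (hU : U = Subgroup.closure
      ({h | ∃ q ∈ Q, h = ε q} ∪
       {h | ∃ r ∈ R, ∃ φ ∈ Submonoid.closure Φ, h = ind φ (ε r)})) :
    Nonempty
      (((FreeGroup (Fin m) ⧸ K) ⧸
          Subgroup.lowerCentralSeries (⊤ : Subgroup (FreeGroup (Fin m) ⧸ K)) n)
        ≃* ((FreeGroup (Fin m) ⧸ Subgroup.lowerCentralSeries (⊤ : Subgroup (FreeGroup (Fin m))) n) ⧸
              Subgroup.normalClosure (U : Set _))) := by
  set L := Subgroup.lowerCentralSeries (⊤ : Subgroup (FreeGroup (Fin m))) n with hL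
  set M : Subgroup (FreeGroup (Fin m)) := K ⊔ L with hM
  have hLnorm : L.Normal := inferInstance
  have hMnorm : M.Normal := Subgroup.sup_normal K L
  have hεsurj : Function.Surjective ε := by
    rw [hε]; exact QuotientGroup.mk'_surjective _
  have hKsurj : Function.Surjective (QuotientGroup.mk' K) :=
    QuotientGroup.mk'_surjective _
  -- the mapped subgroup on the left
  have hmapKL : M.map (QuotientGroup.mk' K) = Subgroup.lowerCentralSeries (⊤ : Subgroup (FreeGroup (Fin m) ⧸ K)) n := by
    rw [hM, Subgroup.map_sup, ← lcs_map_eq_of_surjective (QuotientGroup.mk' K) hKsurj n]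
    have : K.map (QuotientGroup.mk' K) = ⊥ := by
      rw [Subgroup.map_eq_bot_iff, QuotientGroup.ker_mk']
    rw [this, bot_sup_eq]
  haveI : (M.map (QuotientGroup.mk' K)).Normal :=
    hMnorm.map _ hKsurj
  haveI : (M.map (QuotientGroup.mk' L)).Normal :=
    hMnorm.map _ (QuotientGroup.mk'_surjective _)
  -- left equivalence
  have e1 : ((FreeGroup (Fin m) ⧸ K) ⧸ Subgroup.lowerCentralSeries (⊤ : Subgroup (FreeGroup (Fin m) ⧸ K)) n) ≃* FreeGroup (Fin m) ⧸ M :=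
    (QuotientGroup.quotientMulEquivOfEq hmapKL.symm).trans
      (QuotientGroup.quotientQuotientEquivQuotient K M le_sup_left)
  -- the mapped subgroup on the right equals the normal closure of `U`
  have himg : ε '' (Q ∪ ⋃ φ ∈ Submonoid.closure Φ, ⇑φ '' R) =
      ({h | ∃ q ∈ Q, h = ε q} ∪
       {h | ∃ r ∈ R, ∃ φ ∈ Submonoid.closure Φ, h = ind φ (ε r)}) := by
    ext h
    simp only [Set.image_union, Set.mem_union, Set.mem_image, Set.mem_iUnion,
      Set.mem_setOf_eq]
    constructor
    · rintro (⟨q, hq, rfl⟩ | ⟨x, ⟨φ, hφ, r, hr, rfl⟩, rfl⟩)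
      · exact Or.inl ⟨q, hq, rfl⟩
      · exact Or.inr ⟨r, hr, φ, hφ, (hind φ hφ r).symm⟩
    · rintro (⟨q, hq, rfl⟩ | ⟨r, hr, φ, hφ, rfl⟩)
      · exact Or.inl ⟨q, hq, rfl⟩
      · exact Or.inr ⟨φ r, ⟨φ, hφ, r, hr, rfl⟩, (hind φ hφ r).symm⟩
  have hmapε : M.map ε = Subgroup.normalClosure (U : Set _) := by
    rw [hM, Subgroup.map_sup]
    have hLbot : L.map ε = ⊥ := by
      rw [Subgroup.map_eq_bot_iff, hε, QuotientGroup.ker_mk']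
    rw [hLbot, sup_bot_eq, hK, Subgroup.map_normalClosure _ _ hεsurj, himg, hU,
      Subgroup.normalClosure_closure_eq_normalClosure]
  have hmapε' : M.map (QuotientGroup.mk' L) = Subgroup.normalClosure (U : Set _) := by
    rw [← hmapε, hε]
  -- right equivalence
  have e2 : ((FreeGroup (Fin m) ⧸ L) ⧸ Subgroup.normalClosure (U : Set _)) ≃* FreeGroup (Fin m) ⧸ M :=
    (QuotientGroup.quotientMulEquivOfEq hmapε'.symm).trans
      (QuotientGroup.quotientQuotientEquivQuotient L M le_sup_right)
  exact ⟨e1.trans e2.symm⟩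
end

section
/- If the L-presentation ⟨S ∣ Q ∣ Φ ∣ R⟩ is invariant, then K = ⟨⋃_{φ∈Φ*} φ(Q ∪ R)⟩^F; in particular, it defines the same group as the ascending L-presentation ⟨S ∣ ∅ ∣ Φ ∣ Q ∪ R⟩. -/
/-- If the `L`-presentation `⟨S ∣ Q ∣ Φ ∣ R⟩` is invariant,
then `K = ⟨⋃_{φ∈Φ*} φ(Q ∪ R)⟩^F`; in particular it defines the same group as
the ascending `L`-presentation `⟨S ∣ ∅ ∣ Φ ∣ Q ∪ R⟩`. -/
theorem invariant_lpres_eq_ascending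
    (m : ℕ) (Q R : Set (FreeGroup (Fin m)))
    (Φ : Set (Monoid.End (FreeGroup (Fin m))))
    (K : Subgroup (FreeGroup (Fin m)))
    (hK : K = Subgroup.normalClosure
      (Q ∪ ⋃ φ ∈ Submonoid.closure Φ, ⇑φ '' R))
    -- invariance of the `L`-presentation
    (hinv : ∀ φ ∈ Φ, ∀ x ∈ K, φ x ∈ K) :
    K = Subgroup.normalClosure
      (⋃ φ ∈ Submonoid.closure Φ, ⇑φ '' (Q ∪ R)) := by
  -- invariance extends to the whole monoid Φ*
  have hinv' : ∀ φ ∈ Submonoid.closure Φ, ∀ x ∈ K, φ x ∈ K := by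
    intro φ hφ
    induction hφ using Submonoid.closure_induction with
    | mem ψ hψ => exact hinv ψ hψ
    | one => intro x hx; exact hx
    | mul f g hf hg ihf ihg =>
        intro x hx
        exact ihf _ (ihg x hx)
  haveI : K.Normal := hK ▸ Subgroup.normalClosure_normal
  apply le_antisymm
  · rw [hK]
    apply Subgroup.normalClosure_mono
    intro x hx
    rcases hx with hx | hx
    · refine Set.mem_biUnion (Submonoid.one_mem _) ?_
      exact ⟨x, Or.inl hx, rfl⟩
    · simp only [Set.mem_iUnion] at hx ⊢
      obtain ⟨φ, hφ, y, hy, rfl⟩ := hx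
      exact ⟨φ, hφ, y, Or.inr hy, rfl⟩
  · apply Subgroup.normalClosure_le_normal
    intro x hx
    simp only [Set.mem_iUnion] at hx
    obtain ⟨φ, hφ, y, hy, rfl⟩ := hx
    apply hinv' φ hφ
    rw [hK]
    apply Subgroup.subset_normalClosure
    rcases hy with hy | hy
    · exact Or.inl hy
    · refine Or.inr (Set.mem_biUnion (Submonoid.one_mem _) ?_)
      exact ⟨y, hy, rfl⟩
end

section
/- Let G be defined by the finite L-presentation ⟨S ∣ Q ∣ Φ ∣ R⟩, let Q̄ ⊆ Q, and let Ḡ be defined by the L-presentation ⟨S ∣ Q̄ ∣ Φ ∣ R⟩, so that K̄ = ⟨Q̄ ∪ ⋃_{φ∈Φ*} φ(R)⟩^F ⊆ K. For n ∈ ℕ set H = Ḡ/γₙ(Ḡ) and let π : F → H be the natural epimorphism. Then G/γₙ(G) ≅ H/⟨U⟩^H, where U = π(Q∖Q̄) and ⟨U⟩^H is the normal closure of U in H. -/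
lemma aux_normalClosure_union {G : Type*} [Group G] (s t : Set G) :
    Subgroup.normalClosure (s ∪ t) =
      Subgroup.normalClosure s ⊔ Subgroup.normalClosure t := by
  refine le_antisymm (Subgroup.normalClosure_le_normal ?_) (sup_le
    (Subgroup.normalClosure_mono Set.subset_union_left)
    (Subgroup.normalClosure_mono Set.subset_union_right))
  rintro x (hx | hx)
  · exact Subgroup.mem_sup_left (Subgroup.subset_normalClosure hx)
  · exact Subgroup.mem_sup_right (Subgroup.subset_normalClosure hx)

lemma aux_map_lcs {G H : Type*} [Group G] [Group H] (f : G →* H)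
    (hf : Function.Surjective f) (n : ℕ) :
    Subgroup.map f ((⊤ : Subgroup G).lowerCentralSeries n) = (⊤ : Subgroup H).lowerCentralSeries n := by
  induction n with
  | zero => exact Subgroup.map_top_of_surjective f hf
  | succ n ih =>
      show Subgroup.map f ⁅(⊤ : Subgroup G).lowerCentralSeries n, ⊤⁆ = ⁅(⊤ : Subgroup H).lowerCentralSeries n, ⊤⁆
      rw [Subgroup.map_commutator, ih, Subgroup.map_top_of_surjective f hf]

/-- Kernel of the composite `F → F/M → (F/M)/γₙ(F/M)` is `γₙ(F) ⊔ M`. -/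
lemma aux_ker_comp {G : Type*} [Group G] (M : Subgroup G) [M.Normal] (n : ℕ) :
    ((QuotientGroup.mk' ((⊤ : Subgroup (G ⧸ M)).lowerCentralSeries n)).comp
      (QuotientGroup.mk' M)).ker = (⊤ : Subgroup G).lowerCentralSeries n ⊔ M := by
  rw [← MonoidHom.comap_ker, QuotientGroup.ker_mk',
    ← aux_map_lcs (QuotientGroup.mk' M) (QuotientGroup.mk'_surjective M) n,
    Subgroup.comap_map_eq, QuotientGroup.ker_mk']

/-- Let `G = F/K` be defined by the finite `L`-presentation
`⟨S ∣ Q ∣ Φ ∣ R⟩`, let `Q̄ ⊆ Q`, and let `Ḡ = F/K̄` be defined by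
`⟨S ∣ Q̄ ∣ Φ ∣ R⟩`, so that `K̄ ⊆ K`.  For `n ∈ ℕ` set `H = Ḡ/γₙ(Ḡ)`
(here `lowerCentralSeries · n = γ_{n+1}(·)`, covering every `γₙ`, `n ≥ 1`)
with natural epimorphism `π : F → H`.  Then
`G/γₙ(G) ≅ H/⟨π(Q∖Q̄)⟩^H`. -/
theorem lpres_nilpotent_quotient_nonInvariant
    (m : ℕ) (Q Qbar R : Set (FreeGroup (Fin m))) (hQbar : Qbar ⊆ Q)
    (Φ : Set (Monoid.End (FreeGroup (Fin m))))
    (K Kbar : Subgroup (FreeGroup (Fin m))) [K.Normal] [Kbar.Normal]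
    (hK : K = Subgroup.normalClosure
      (Q ∪ ⋃ φ ∈ Submonoid.closure Φ, ⇑φ '' R))
    (hKbar : Kbar = Subgroup.normalClosure
      (Qbar ∪ ⋃ φ ∈ Submonoid.closure Φ, ⇑φ '' R))
    (hsub : Kbar ≤ K)
    (n : ℕ)
    -- the natural epimorphism `π : F → H = Ḡ/γ_{n+1}(Ḡ)`
    (π : FreeGroup (Fin m) →*
      ((FreeGroup (Fin m) ⧸ Kbar) ⧸
        (⊤ : Subgroup (FreeGroup (Fin m) ⧸ Kbar)).lowerCentralSeries n))
    (hπ : π = (QuotientGroup.mk'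
        ((⊤ : Subgroup (FreeGroup (Fin m) ⧸ Kbar)).lowerCentralSeries n)).comp
      (QuotientGroup.mk' Kbar)) :
    Nonempty
      (((FreeGroup (Fin m) ⧸ K) ⧸
          (⊤ : Subgroup (FreeGroup (Fin m) ⧸ K)).lowerCentralSeries n)
        ≃* (((FreeGroup (Fin m) ⧸ Kbar) ⧸
              (⊤ : Subgroup (FreeGroup (Fin m) ⧸ Kbar)).lowerCentralSeries n) ⧸
            Subgroup.normalClosure (⇑π '' (Q \ Qbar)))) := by
  
  set N := Subgroup.normalClosure (⇑π '' (Q \ Qbar)) with hN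
  -- π is surjective
  have hπsurj : Function.Surjective π := by
    rw [hπ]
    exact (QuotientGroup.mk'_surjective _).comp (QuotientGroup.mk'_surjective Kbar)
  -- the two composite epimorphisms from F
  set f₁ : FreeGroup (Fin m) →* (FreeGroup (Fin m) ⧸ K) ⧸ (⊤ : Subgroup (FreeGroup (Fin m) ⧸ K)).lowerCentralSeries n :=
    (QuotientGroup.mk' ((⊤ : Subgroup (FreeGroup (Fin m) ⧸ K)).lowerCentralSeries n)).comp (QuotientGroup.mk' K)
  set f₂ := (QuotientGroup.mk' N).comp π
  have hf₁ : Function.Surjective f₁ :=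
    (QuotientGroup.mk'_surjective _).comp (QuotientGroup.mk'_surjective K)
  have hf₂ : Function.Surjective f₂ :=
    (QuotientGroup.mk'_surjective _).comp hπsurj
  -- K = ⟨Q \ Q̄⟩^F ⊔ K̄
  have hKsplit : K = Subgroup.normalClosure (Q \ Qbar) ⊔ Kbar := by
    rw [hK, hKbar, ← aux_normalClosure_union]
    congr 1
    rw [← Set.union_assoc, Set.diff_union_of_subset hQbar]
  -- compute the kernels
  have hker₁ : f₁.ker = (⊤ : Subgroup (FreeGroup (Fin m))).lowerCentralSeries n ⊔ K := aux_ker_comp K n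
  have hkerπ : π.ker = (⊤ : Subgroup (FreeGroup (Fin m))).lowerCentralSeries n ⊔ Kbar := by
    rw [hπ]; exact aux_ker_comp Kbar n
  have hker₂ : f₂.ker = f₁.ker := by
    rw [show f₂.ker = Subgroup.comap π (QuotientGroup.mk' N).ker from
        (MonoidHom.comap_ker _ _).symm,
      QuotientGroup.ker_mk', hN,
      ← Subgroup.map_normalClosure (Q \ Qbar) π hπsurj,
      Subgroup.comap_map_eq, hkerπ, hker₁, hKsplit]
    rw [← sup_assoc, sup_comm (Subgroup.normalClosure (Q \ Qbar))
      ((⊤ : Subgroup (FreeGroup (Fin m))).lowerCentralSeries n), sup_assoc]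
  exact ⟨((QuotientGroup.quotientKerEquivOfSurjective f₁ hf₁).symm.trans
    ((QuotientGroup.quotientMulEquivOfEq hker₂.symm).trans
      (QuotientGroup.quotientKerEquivOfSurjective f₂ hf₂)))⟩
end

section
/- The subgroup ⟨σ₀, σ₁, …, σ_{p−1}⟩ of Γ^p is isomorphic, via an isomorphism sending the i-th generator to σᵢ, to the presented group on generators x₀,…,x_{p−1} with relators {xᵢ^p : i ∈ ℤ/pℤ} ∪ {[xᵢ^{x_{i-1}ⁿ}, xⱼ^{x_{j-1}^m}] : 2 ≤ |i−j| ≤ p−2, 0 ≤ m,n ≤ p−1} ∪ {xᵢ^{−x_{i-1}^{n+1}}·xᵢ^{x_{i-1}ⁿ·x_{i-1}^{x_{i-2}^m}} : i ∈ ℤ/pℤ, 0 ≤ m,n ≤ p−1} (indices mod p); equivalently, the kernel of the homomorphism from the free group on x₀,…,x_{p−1} to Γ^p sending xᵢ ↦ σᵢ is the normal closure of these relators. -/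
/-- Conjugation `g ^ h = h⁻¹ g h`. -/
def cnj {G : Type*} [Group G] (g h : G) : G := h⁻¹ * g * h

/-- The commutator `[g, h] = g⁻¹ h⁻¹ g h`. -/
def pbra {G : Type*} [Group G] (g h : G) : G := g⁻¹ * h⁻¹ * g * h

/-- The relators `α^p, ρ^p` of `Γ = ⟨α, ρ ∣ α^p, ρ^p⟩`. -/
def CpCpRels (p : ℕ) : Set (FreeGroup (Fin 2)) :=
  {FreeGroup.of 0 ^ p, FreeGroup.of 1 ^ p}

/-- `Γ = ⟨α, ρ ∣ α^p, ρ^p⟩`, the free product of two cyclic groups of order `p`. -/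
def Gam (p : ℕ) : Type := PresentedGroup (CpCpRels p)

instance (p : ℕ) : Group (Gam p) := by unfold Gam; infer_instance

/-- The generator `α` of `Γ`. -/
def αΓ (p : ℕ) : Gam p := PresentedGroup.of 0

/-- The generator `ρ` of `Γ`. -/
def ρΓ (p : ℕ) : Gam p := PresentedGroup.of 1

/-- `αᵢ ∈ Γ^p`: the element whose `i`-th coordinate is `α`, others trivial. -/
def αt (p : ℕ) (i : ZMod p) : ZMod p → Gam p := Pi.mulSingle i (αΓ p)

/-- `ρᵢ ∈ Γ^p`: the element whose `i`-th coordinate is `ρ`, others trivial. -/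
def ρt (p : ℕ) (i : ZMod p) : ZMod p → Gam p := Pi.mulSingle i (ρΓ p)

/-- `σᵢ = ρᵢ·α_{i+1} ∈ Γ^p` (indices mod `p`). -/
def σt (p : ℕ) (i : ZMod p) : ZMod p → Gam p := ρt p i * αt p (i + 1)

/-- The relators of the presentation of `Φ(Δ) = ⟨σ₀, …, σ_{p-1}⟩ ≤ Γ^p`:
`xᵢ^p`; the commutators `[xᵢ^{x_{i-1}ⁿ}, xⱼ^{x_{j-1}^m}]` for
`2 ≤ |i-j| ≤ p-2` (equivalently `i - j ∉ {0, 1, -1}` in `ℤ/pℤ`) and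
`0 ≤ m, n ≤ p-1`; and the words
`xᵢ^{-x_{i-1}^{n+1}}·xᵢ^{x_{i-1}ⁿ·x_{i-1}^{x_{i-2}^m}}` (indices mod `p`). -/
def PhiDeltaRels (p : ℕ) : Set (FreeGroup (ZMod p)) :=
  {w | ∃ i : ZMod p, w = FreeGroup.of i ^ p} ∪
  {w | ∃ (i j : ZMod p) (n m : ℕ), n < p ∧ m < p ∧
      i - j ≠ 0 ∧ i - j ≠ 1 ∧ i - j ≠ -1 ∧
      w = pbra (cnj (FreeGroup.of i) (FreeGroup.of (i - 1) ^ n))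
        (cnj (FreeGroup.of j) (FreeGroup.of (j - 1) ^ m))} ∪
  {w | ∃ (i : ZMod p) (n m : ℕ), n < p ∧ m < p ∧
      w = (cnj (FreeGroup.of i) (FreeGroup.of (i - 1) ^ (n + 1)))⁻¹ *
        cnj (FreeGroup.of i) (FreeGroup.of (i - 1) ^ n *
          cnj (FreeGroup.of (i - 1)) (FreeGroup.of (i - 2) ^ m))}

namespace PhiDeltaAux

open Subgroup

section CnjLemmas

variable {G H : Type*} [Group G] [Group H]

@[simp] lemma cnj_one (g : G) : cnj g 1 = g := by simp [cnj]

@[simp] lemma cnj_one_left (h : G) : cnj 1 h = 1 := by simp [cnj]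

lemma cnj_mul_right (g h₁ h₂ : G) : cnj g (h₁ * h₂) = cnj (cnj g h₁) h₂ := by
  simp [cnj, mul_assoc]

lemma cnj_mul_left (g₁ g₂ h : G) : cnj (g₁ * g₂) h = cnj g₁ h * cnj g₂ h := by
  simp [cnj, mul_assoc]

lemma cnj_inv_left (g h : G) : cnj g⁻¹ h = (cnj g h)⁻¹ := by
  simp [cnj, mul_assoc]

lemma cnj_pow_left (g h : G) (n : ℕ) : cnj (g ^ n) h = (cnj g h) ^ n := by
  simp [cnj]
  induction n with
  | zero => simp
  | succ k ih => rw [pow_succ, pow_succ, ← ih]; group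

lemma map_cnj (f : G →* H) (g h : G) : f (cnj g h) = cnj (f g) (f h) := by
  simp [cnj]

lemma map_pbra (f : G →* H) (g h : G) : f (pbra g h) = pbra (f g) (f h) := by
  simp [pbra]

lemma commute_of_pbra {g h : G} (e : pbra g h = 1) : Commute g h := by
  have h2 : g * h * (pbra g h) = g * h := by rw [e, mul_one]
  unfold pbra at h2
  have : g * h * (g⁻¹ * h⁻¹ * g * h) = h * g * (g⁻¹ * h⁻¹ * g * h) := by
    rw [h2]; group
  unfold Commute SemiconjBy
  exact mul_right_cancel this

/-- if a subgroup's generators are stable under conjugation by `h`, so is the subgroup. -/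
lemma conj_mem_closure {S : Set G} {h : G}
    (hS : ∀ s ∈ S, cnj s h ∈ closure S) :
    ∀ g ∈ closure S, cnj g h ∈ closure S := by
  intro g hg
  induction hg using Subgroup.closure_induction with
  | mem x hx => exact hS x hx
  | one => simp
  | mul x y _ _ hx hy => rw [cnj_mul_left]; exact (closure S).mul_mem hx hy
  | inv x _ hx => rw [cnj_inv_left]; exact (closure S).inv_mem hx

lemma conj_pow_mem_closure {S : Set G} {h : G}
    (hS : ∀ s ∈ S, cnj s h ∈ closure S) (hS' : ∀ s ∈ S, cnj s h⁻¹ ∈ closure S) :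
    ∀ (n : ℕ), ∀ g ∈ closure S, cnj g (h ^ n) ∈ closure S := by
  intro n
  induction n with
  | zero => intro g hg; simpa using hg
  | succ k ih =>
      intro g hg
      rw [pow_succ, cnj_mul_right]
      exact conj_mem_closure hS _ (ih g hg)

end CnjLemmas

section Zp

variable {p : ℕ}

lemma one_ne_zero' (hp : 3 ≤ p) : (1 : ZMod p) ≠ 0 := by
  haveI : NeZero p := ⟨by omega⟩
  have : ((1 : ℕ) : ZMod p) ≠ 0 := by
    rw [Ne, ZMod.natCast_eq_zero_iff]
    intro hd
    have := Nat.le_of_dvd (by omega) hd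
    omega
  simpa using this

lemma two_ne_zero' (hp : 3 ≤ p) : (2 : ZMod p) ≠ 0 := by
  haveI : NeZero p := ⟨by omega⟩
  have : ((2 : ℕ) : ZMod p) ≠ 0 := by
    rw [Ne, ZMod.natCast_eq_zero_iff]
    intro hd
    have := Nat.le_of_dvd (by omega) hd
    omega
  simpa using this

/-- `g ^ (a : ZMod p).val`, a convenient power operation. -/
def zpw {G : Type*} [Monoid G] (g : G) (a : ZMod p) : G := g ^ a.val

lemma pow_val_mod {G : Type*} [Group G] (g : G) (hg : g ^ p = 1) (k : ℕ) :
    g ^ k = g ^ (k % p) := pow_eq_pow_mod k hg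

lemma zpw_add {G : Type*} [Group G] (hp : 3 ≤ p) (g : G) (hg : g ^ p = 1) (a b : ZMod p) :
    zpw g (a + b) = zpw g a * zpw g b := by
  haveI : NeZero p := ⟨by omega⟩
  rw [zpw, zpw, zpw, ← pow_add, ZMod.val_add, ← pow_val_mod g hg]

@[simp] lemma zpw_zero {G : Type*} [Group G] (g : G) : zpw g (0 : ZMod p) = 1 := by
  simp [zpw, ZMod.val_zero]

lemma zpw_one (hp : 3 ≤ p) {G : Type*} [Group G] (g : G) : zpw g (1 : ZMod p) = g := by
  haveI : Fact (1 < p) := ⟨by omega⟩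
  simp [zpw, ZMod.val_one]

lemma zpw_natCast {G : Type*} [Group G] (hp : 3 ≤ p) (g : G) (hg : g ^ p = 1) (k : ℕ) :
    zpw g (k : ZMod p) = g ^ k := by
  haveI : NeZero p := ⟨by omega⟩
  rw [zpw, ZMod.val_natCast, ← pow_val_mod g hg]

end Zp


section GamFacts

variable {p : ℕ}

lemma zmod_ne_add (hp : 3 ≤ p) (i : ZMod p) {c : ZMod p} (hc : c ≠ 0) : i ≠ i + c :=
  fun e => hc (left_eq_add.mp e)

lemma neg_one_ne_zero' (hp : 3 ≤ p) : (-1 : ZMod p) ≠ 0 :=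
  neg_ne_zero.mpr (one_ne_zero' hp)

lemma neg_two_ne_zero' (hp : 3 ≤ p) : (-2 : ZMod p) ≠ 0 :=
  neg_ne_zero.mpr (two_ne_zero' hp)

lemma zmod_index_ne (hp : 3 ≤ p) {a b c : ZMod p} (hc : c ≠ 0) (h : b = a + c) : a ≠ b := by
  subst h
  exact zmod_ne_add hp a hc

/-- The canonical projection onto `Γ`. -/
def mkΓ (p : ℕ) : FreeGroup (Fin 2) →* Gam p := QuotientGroup.mk' _

lemma mkΓ_eq_one_iff (w : FreeGroup (Fin 2)) :
    mkΓ p w = 1 ↔ w ∈ Subgroup.normalClosure (CpCpRels p) := by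
  exact QuotientGroup.eq_one_iff w

lemma alphaGam : αΓ p = mkΓ p (FreeGroup.of 0) := rfl
lemma rhoGam : ρΓ p = mkΓ p (FreeGroup.of 1) := rfl

lemma alphaGam_pow : (αΓ p) ^ p = 1 := by
  rw [alphaGam, ← map_pow, mkΓ_eq_one_iff]
  exact Subgroup.subset_normalClosure (Or.inl rfl)

lemma rhoGam_pow : (ρΓ p) ^ p = 1 := by
  rw [rhoGam, ← map_pow, mkΓ_eq_one_iff]
  exact Subgroup.subset_normalClosure (Or.inr rfl)

def fθ (p : ℕ) : Fin 2 → Multiplicative (ZMod p) := ![1, Multiplicative.ofAdd 1]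

lemma hθ (p : ℕ) : ∀ r ∈ CpCpRels p, FreeGroup.lift (fθ p) r = 1 := by
  intro r hr
  rcases hr with h | h <;> subst h <;> rw [map_pow, FreeGroup.lift_apply_of]
  · simp [fθ]
  · show (fθ p 1) ^ p = 1
    rw [fθ]
    simp only [Matrix.cons_val_one, Matrix.head_cons, Matrix.cons_val_zero]
    rw [← ofAdd_nsmul]
    simp [nsmul_eq_mul, ZMod.natCast_self]

/-- The exponent-of-`ρ` character `Γ →* ℤ/p`. -/
def θρ (p : ℕ) : Gam p →* Multiplicative (ZMod p) := PresentedGroup.toGroup (hθ p)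

lemma θρ_alpha : θρ p (αΓ p) = 1 := by
  show PresentedGroup.toGroup (hθ p) (PresentedGroup.of 0) = 1
  rw [PresentedGroup.toGroup.of]
  simp [fθ]

lemma θρ_rho : θρ p (ρΓ p) = Multiplicative.ofAdd (1 : ZMod p) := by
  show PresentedGroup.toGroup (hθ p) (PresentedGroup.of 1) = _
  rw [PresentedGroup.toGroup.of]
  simp [fθ]

lemma σt_apply (hp : 3 ≤ p) (l j : ZMod p) :
    σt p l j = if j = l then ρΓ p else if j = l + 1 then αΓ p else 1 := by
  have h1 := one_ne_zero' hp
  simp only [σt, ρt, αt, Pi.mul_apply, Pi.mulSingle_apply]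
  by_cases hj : j = l
  · subst hj
    rw [if_pos rfl, if_pos rfl, if_neg (zmod_ne_add hp j h1), mul_one]
  · rw [if_neg hj, if_neg hj, one_mul]

lemma σt_pow_p (hp : 3 ≤ p) (l : ZMod p) : σt p l ^ p = 1 := by
  funext j
  rw [Pi.pow_apply, σt_apply hp, Pi.one_apply]
  by_cases hj : j = l
  · rw [if_pos hj, rhoGam_pow]
  · rw [if_neg hj]
    by_cases hj2 : j = l + 1
    · rw [if_pos hj2, alphaGam_pow]
    · rw [if_neg hj2, one_pow]

lemma pbra_one_left {G : Type*} [Group G] (h : G) : pbra 1 h = 1 := by simp [pbra]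
lemma pbra_one_right {G : Type*} [Group G] (g : G) : pbra g 1 = 1 := by simp [pbra]

lemma cnj_apply (g h : ZMod p → Gam p) (k : ZMod p) : (cnj g h) k = cnj (g k) (h k) := rfl
lemma pbra_apply (g h : ZMod p → Gam p) (k : ZMod p) : (pbra g h) k = pbra (g k) (h k) := rfl

/-- All relators are killed by `xᵢ ↦ σᵢ`. -/
lemma rels_sub (hp : 3 ≤ p) :
    ∀ w ∈ PhiDeltaRels p, (FreeGroup.lift (σt p)) w = 1 := by
  intro w hw
  have h1 := one_ne_zero' hp
  have h2 := two_ne_zero' hp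
  have hm1 := neg_one_ne_zero' hp
  have hm2 := neg_two_ne_zero' hp
  rcases hw with (⟨i, rfl⟩ | ⟨i, j, n, m, hn, hm, hij0, hij1, hijm1, rfl⟩) |
    ⟨i, n, m, hn, hm, rfl⟩
  · rw [map_pow, FreeGroup.lift_apply_of]
    exact σt_pow_p hp i
  · rw [map_pbra, map_cnj, map_cnj, map_pow, map_pow]
    simp only [FreeGroup.lift_apply_of]
    funext k
    rw [pbra_apply, cnj_apply, cnj_apply, Pi.pow_apply, Pi.pow_apply, Pi.one_apply]
    by_cases hki : k = i
    · have hkj : σt p j k = 1 := by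
        rw [σt_apply hp, if_neg, if_neg]
        · subst hki; intro e; exact hij1 (by rw [e]; ring)
        · subst hki; intro e; exact hij0 (by rw [e]; ring)
      rw [hkj, cnj_one_left, pbra_one_right]
    · by_cases hki1 : k = i + 1
      · have hkj : σt p j k = 1 := by
          rw [σt_apply hp, if_neg, if_neg]
          · subst hki1; intro e
            exact hij0 (by
              have : i = j := add_right_cancel (b := (1 : ZMod p)) e
              rw [this]; ring)
          · subst hki1; intro e; exact hijm1 (by rw [← e]; ring)
        rw [hkj, cnj_one_left, pbra_one_right]
      · have hkI : σt p i k = 1 := by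
          rw [σt_apply hp, if_neg hki, if_neg hki1]
        rw [hkI, cnj_one_left, pbra_one_left]
  · rw [map_mul, map_inv, map_cnj, map_cnj, map_pow, map_mul, map_pow, map_cnj, map_pow]
    simp only [FreeGroup.lift_apply_of]
    funext k
    rw [Pi.mul_apply, Pi.inv_apply, cnj_apply, cnj_apply, Pi.mul_apply, cnj_apply,
      Pi.pow_apply, Pi.pow_apply, Pi.pow_apply, Pi.one_apply]
    by_cases hki : k = i
    · subst hki
      have ha : σt p k k = ρΓ p := by rw [σt_apply hp, if_pos rfl]
      have hb : σt p (k - 1) k = αΓ p := by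
        rw [σt_apply hp, if_neg (zmod_index_ne hp hm1 (by ring)), if_pos (by ring)]
      have hc : σt p (k - 2) k = 1 := by
        rw [σt_apply hp, if_neg (zmod_index_ne hp hm2 (by ring)),
          if_neg (zmod_index_ne hp hm1 (by ring))]
      rw [ha, hb, hc, one_pow, cnj_one]
      unfold cnj
      group
    · by_cases hki1 : k = i + 1
      · subst hki1
        have ha : σt p i (i + 1) = αΓ p := by
          rw [σt_apply hp, if_neg (zmod_index_ne hp hm1 (by ring)), if_pos rfl]
        have hb : σt p (i - 1) (i + 1) = 1 := by
          rw [σt_apply hp, if_neg (zmod_index_ne hp hm2 (by ring)),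
            if_neg (zmod_index_ne hp hm1 (by ring))]
        rw [ha, hb, one_pow, one_pow, cnj_one, cnj_one_left, mul_one, cnj_one]
        group
      · have hki' : σt p i k = 1 := by rw [σt_apply hp, if_neg hki, if_neg hki1]
        rw [hki', cnj_one_left, cnj_one_left]
        simp

end GamFacts


section Qside

variable {p : ℕ}

/-- The presented group `F/N`. -/
abbrev Qgrp (p : ℕ) := FreeGroup (ZMod p) ⧸ Subgroup.normalClosure (PhiDeltaRels p)

def πQ (p : ℕ) : FreeGroup (ZMod p) →* Qgrp p := QuotientGroup.mk' _

lemma πQ_eq_one_iff (w : FreeGroup (ZMod p)) :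
    πQ p w = 1 ↔ w ∈ Subgroup.normalClosure (PhiDeltaRels p) :=
  QuotientGroup.eq_one_iff w

/-- Generators of `Q`. -/
def Xg (p : ℕ) (i : ZMod p) : Qgrp p := πQ p (FreeGroup.of i)

lemma Xg_pow (i : ZMod p) : Xg p i ^ p = 1 := by
  rw [Xg, ← map_pow, πQ_eq_one_iff]
  exact Subgroup.subset_normalClosure (Or.inl (Or.inl ⟨i, rfl⟩))

/-- `z i n = xᵢ^{x_{i-1}ⁿ}` in `Q`. -/
def zz (p : ℕ) (i n : ZMod p) : Qgrp p := cnj (Xg p i) (zpw (Xg p (i - 1)) n)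

@[simp] lemma zz_zero (i : ZMod p) : zz p i 0 = Xg p i := by
  rw [zz, zpw_zero, cnj_one]

lemma zz_pow_p (i n : ZMod p) : zz p i n ^ p = 1 := by
  rw [zz, ← cnj_pow_left, Xg_pow, cnj_one_left]

lemma val_lt' (hp : 3 ≤ p) (n : ZMod p) : n.val < p := by
  haveI : NeZero p := ⟨by omega⟩
  exact ZMod.val_lt n

/-- Relator family 2: distant conjugates commute. -/
lemma comm_far (hp : 3 ≤ p) {i j : ZMod p} (hij0 : i - j ≠ 0) (hij1 : i - j ≠ 1)
    (hijm1 : i - j ≠ -1) (n m : ZMod p) : Commute (zz p i n) (zz p j m) := by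
  have hmem : πQ p (pbra (cnj (FreeGroup.of i) (FreeGroup.of (i - 1) ^ n.val))
      (cnj (FreeGroup.of j) (FreeGroup.of (j - 1) ^ m.val))) = 1 := by
    rw [πQ_eq_one_iff]
    exact Subgroup.subset_normalClosure (Or.inl (Or.inr
      ⟨i, j, n.val, m.val, val_lt' hp n, val_lt' hp m, hij0, hij1, hijm1, rfl⟩))
  rw [map_pbra, map_cnj, map_cnj, map_pow, map_pow] at hmem
  exact commute_of_pbra hmem

/-- Relator family 3: `z i (n+1) = (z i n)^{z (i-1) m}`. -/
lemma zz_shift (hp : 3 ≤ p) (i n m : ZMod p) :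
    cnj (zz p i n) (zz p (i - 1) m) = zz p i (n + 1) := by
  haveI : NeZero p := ⟨by omega⟩
  have hmem : πQ p ((cnj (FreeGroup.of i) (FreeGroup.of (i - 1) ^ (n.val + 1)))⁻¹ *
      cnj (FreeGroup.of i) (FreeGroup.of (i - 1) ^ n.val *
        cnj (FreeGroup.of (i - 1)) (FreeGroup.of (i - 2) ^ m.val))) = 1 := by
    rw [πQ_eq_one_iff]
    exact Subgroup.subset_normalClosure (Or.inr
      ⟨i, n.val, m.val, val_lt' hp n, val_lt' hp m, rfl⟩)
  rw [map_mul, map_inv, map_cnj, map_cnj, map_pow, map_mul, map_pow, map_cnj, map_pow,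
    inv_mul_eq_one] at hmem
  have e2 : i - 1 - 1 = i - 2 := by ring
  have lhs_eq : cnj (Xg p i) (Xg p (i - 1) ^ (n.val + 1)) = zz p i (n + 1) := by
    rw [zz]
    congr 1
    rw [zpw, ZMod.val_add, ZMod.val_one'' (by
      intro h
      omega), ← pow_val_mod _ (Xg_pow (i - 1))]
  have rhs_eq : cnj (Xg p i) (Xg p (i - 1) ^ n.val *
      cnj (Xg p (i - 1)) (Xg p (i - 2) ^ m.val)) = cnj (zz p i n) (zz p (i - 1) m) := by
    rw [cnj_mul_right]
    congr 1
    rw [zz, e2]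
    rfl
  have hmem' : cnj (Xg p i) (Xg p (i - 1) ^ (n.val + 1)) =
      cnj (Xg p i) (Xg p (i - 1) ^ n.val *
        cnj (Xg p (i - 1)) (Xg p (i - 2) ^ m.val)) := hmem
  rw [lhs_eq, rhs_eq] at hmem'
  exact hmem'.symm

/-- `z i (n-1) = (z i n)^{z (i-1) m}⁻¹`. -/
lemma zz_shift_inv (hp : 3 ≤ p) (i n m : ZMod p) :
    zz p (i - 1) m * zz p i n * (zz p (i - 1) m)⁻¹ = zz p i (n - 1) := by
  have h := zz_shift hp i (n - 1) m
  rw [sub_add_cancel] at h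
  rw [← h, cnj]
  group

/-- Swap: `z_{i+1}(b) · z_i(a) = z_i(a) · z_{i+1}(b+1)`. -/
lemma swap_up (hp : 3 ≤ p) (i a b : ZMod p) :
    zz p (i + 1) b * zz p i a = zz p i a * zz p (i + 1) (b + 1) := by
  have h := zz_shift hp (i + 1) b a
  rw [add_sub_cancel_right] at h
  rw [cnj] at h
  calc zz p (i + 1) b * zz p i a
      = zz p i a * ((zz p i a)⁻¹ * zz p (i + 1) b * zz p i a) := by group
    _ = zz p i a * zz p (i + 1) (b + 1) := by rw [h]

lemma swap_up' (hp : 3 ≤ p) (i a b : ZMod p) :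
    zz p i a * zz p (i + 1) b = zz p (i + 1) (b - 1) * zz p i a := by
  have h := swap_up hp i a (b - 1)
  rw [sub_add_cancel] at h
  rw [h]

/-- push a power of `X i` through `z_{i+1}`. -/
lemma pow_X_swap (hp : 3 ≤ p) (i b : ZMod p) (k : ℕ) :
    Xg p i ^ k * zz p (i + 1) b = zz p (i + 1) (b - k) * Xg p i ^ k := by
  induction k with
  | zero => simp
  | succ k ih =>
      have step : Xg p i * zz p (i + 1) (b - k) = zz p (i + 1) (b - k - 1) * Xg p i := by
        have := swap_up' hp i 0 (b - k)
        rwa [zz_zero] at this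
      calc Xg p i ^ (k + 1) * zz p (i + 1) b
          = Xg p i * (Xg p i ^ k * zz p (i + 1) b) := by rw [pow_succ']; group
        _ = Xg p i * (zz p (i + 1) (b - k) * Xg p i ^ k) := by rw [ih]
        _ = (Xg p i * zz p (i + 1) (b - k)) * Xg p i ^ k := by group
        _ = zz p (i + 1) (b - k - 1) * Xg p i ^ (k + 1) := by rw [step, pow_succ']; group
        _ = zz p (i + 1) (b - (k + 1 : ℕ)) * Xg p i ^ (k + 1) := by
            congr 2
            push_cast
            ring

lemma pow_X_swap' (hp : 3 ≤ p) (i b : ZMod p) (k : ℕ) :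
    zz p (i + 1) b * Xg p i ^ k = Xg p i ^ k * zz p (i + 1) (b + k) := by
  have := pow_X_swap hp i (b + k) k
  rw [add_sub_cancel_right] at this
  rw [this]

/-- `u i n = z i n · xᵢ⁻¹` in `Q`. -/
def uu (p : ℕ) (i n : ZMod p) : Qgrp p := zz p i n * (Xg p i)⁻¹

@[simp] lemma uu_zero (i : ZMod p) : uu p i 0 = 1 := by rw [uu, zz_zero, mul_inv_cancel]

/-- `z_{i+1}` centralizes `u_i`. -/
lemma uu_comm_up (hp : 3 ≤ p) (i n b : ZMod p) :
    Commute (zz p (i + 1) b) (uu p i n) := by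
  have hXinv : (Xg p i)⁻¹ * zz p (i + 1) b = zz p (i + 1) (b + 1) * (Xg p i)⁻¹ := by
    have h := swap_up hp i 0 b
    rw [zz_zero] at h
    calc (Xg p i)⁻¹ * zz p (i + 1) b
        = (Xg p i)⁻¹ * (zz p (i + 1) b * Xg p i) * (Xg p i)⁻¹ := by group
      _ = (Xg p i)⁻¹ * (Xg p i * zz p (i + 1) (b + 1)) * (Xg p i)⁻¹ := by rw [h]
      _ = zz p (i + 1) (b + 1) * (Xg p i)⁻¹ := by group
  have hz : zz p i n * zz p (i + 1) (b + 1) = zz p (i + 1) b * zz p i n := by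
    have := swap_up hp i n b
    rw [this]
  unfold Commute SemiconjBy
  calc zz p (i + 1) b * uu p i n
      = zz p (i + 1) b * zz p i n * (Xg p i)⁻¹ := by rw [uu]; group
    _ = zz p i n * zz p (i + 1) (b + 1) * (Xg p i)⁻¹ := by rw [← hz]
    _ = zz p i n * ((Xg p i)⁻¹ * zz p (i + 1) b) := by rw [hXinv]; group
    _ = uu p i n * zz p (i + 1) b := by rw [uu]; group

end Qside


section Msub

open Subgroup

variable {p : ℕ}

/-- `c i n k`: conjugate of `u i n` by `xᵢᵏ`. -/
def cg (p : ℕ) (i n k : ZMod p) : Qgrp p := cnj (uu p i n) (zpw (Xg p i) k)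

def Sgen (p : ℕ) (i : ZMod p) : Set (Qgrp p) := {g | ∃ n k : ZMod p, g = cg p i n k}

def Mi (p : ℕ) (i : ZMod p) : Subgroup (Qgrp p) := closure (Sgen p i)

def Mall (p : ℕ) : Subgroup (Qgrp p) := closure (⋃ i, Sgen p i)

lemma cg_mem (i n k : ZMod p) : cg p i n k ∈ Mi p i :=
  subset_closure ⟨n, k, rfl⟩

lemma cg_k_zero (i n : ZMod p) : cg p i n 0 = uu p i n := by
  rw [cg, zpw_zero, cnj_one]

lemma uu_mem (i n : ZMod p) : uu p i n ∈ Mi p i := by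
  rw [← cg_k_zero]; exact cg_mem i n 0

lemma Mi_le_Mall (i : ZMod p) : Mi p i ≤ Mall p :=
  closure_mono (Set.subset_iUnion (Sgen p) i)

lemma cnj_of_commute {G : Type*} [Group G] {g h : G} (hc : Commute h g) : cnj g h = g := by
  rw [cnj, hc.inv_left.eq, inv_mul_cancel_right]

/-- distant `z`'s commute with the generators of `Mᵢ`. -/
lemma zz_comm_cg_far (hp : 3 ≤ p) {i j : ZMod p} (hij0 : i - j ≠ 0) (hij1 : i - j ≠ 1)
    (hijm1 : i - j ≠ -1) (b n k : ZMod p) : Commute (zz p j b) (cg p i n k) := by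
  have base : ∀ a : ZMod p, Commute (zz p j b) (zz p i a) := fun a =>
    (comm_far hp hij0 hij1 hijm1 a b).symm
  have hX : Commute (zz p j b) (Xg p i) := by
    have := base 0
    rwa [zz_zero] at this
  rw [cg, cnj, uu, zpw, mul_assoc]
  exact ((hX.pow_right k.val).inv_right.mul_right
    (((base n).mul_right hX.inv_right).mul_right (hX.pow_right k.val)))

/-- `z_{i+1}` centralizes the generators of `Mᵢ`. -/
lemma zz_comm_cg_up (hp : 3 ≤ p) (i b n k : ZMod p) :
    Commute (zz p (i + 1) b) (cg p i n k) := by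
  set v := k.val with hv
  have c1 : Xg p i ^ v * zz p (i + 1) b = zz p (i + 1) (b - v) * Xg p i ^ v :=
    pow_X_swap hp i b v
  have c3 : (Xg p i ^ v)⁻¹ * zz p (i + 1) (b - v) = zz p (i + 1) b * (Xg p i ^ v)⁻¹ := by
    have h := pow_X_swap' hp i (b - v) v
    rw [sub_add_cancel] at h
    calc (Xg p i ^ v)⁻¹ * zz p (i + 1) (b - v)
        = (Xg p i ^ v)⁻¹ * (zz p (i + 1) (b - v) * Xg p i ^ v) * (Xg p i ^ v)⁻¹ := by group
      _ = (Xg p i ^ v)⁻¹ * (Xg p i ^ v * zz p (i + 1) b) * (Xg p i ^ v)⁻¹ := by rw [h]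
      _ = zz p (i + 1) b * (Xg p i ^ v)⁻¹ := by group
  have c2 : uu p i n * zz p (i + 1) (b - v) = zz p (i + 1) (b - v) * uu p i n :=
    (uu_comm_up hp i n (b - v)).eq.symm
  unfold Commute SemiconjBy
  calc zz p (i + 1) b * cg p i n k
      = (zz p (i + 1) b * (Xg p i ^ v)⁻¹) * uu p i n * Xg p i ^ v := by
        rw [cg, cnj, uu, zpw, ← hv]; group
    _ = (Xg p i ^ v)⁻¹ * (zz p (i + 1) (b - v) * uu p i n) * Xg p i ^ v := by
        rw [← c3]; group
    _ = (Xg p i ^ v)⁻¹ * uu p i n * (zz p (i + 1) (b - v) * Xg p i ^ v) := by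
        rw [← c2]; group
    _ = (Xg p i ^ v)⁻¹ * uu p i n * (Xg p i ^ v * zz p (i + 1) b) := by rw [← c1]
    _ = cg p i n k * zz p (i + 1) b := by rw [cg, cnj, uu, zpw, ← hv]; group

lemma zpw_succ (hp : 3 ≤ p) {G : Type*} [Group G] (g : G) (hg : g ^ p = 1) (k : ZMod p) :
    zpw g k * g = zpw g (k + 1) := by
  rw [zpw_add hp g hg k 1, zpw_one hp]

lemma cg_conj_X (hp : 3 ≤ p) (i n k : ZMod p) :
    cnj (cg p i n k) (Xg p i) = cg p i n (k + 1) := by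
  rw [cg, ← cnj_mul_right, zpw_succ hp _ (Xg_pow i), cg]

lemma cg_conj_X_inv (hp : 3 ≤ p) (i n k : ZMod p) :
    cnj (cg p i n k) ((Xg p i)⁻¹) = cg p i n (k - 1) := by
  have h : zpw (Xg p i) k * (Xg p i)⁻¹ = zpw (Xg p i) (k - 1) := by
    have := zpw_succ hp _ (Xg_pow i) (k - 1)
    rw [sub_add_cancel] at this
    rw [← this]; group
  rw [cg, ← cnj_mul_right, h, cg]

lemma uu_conj_z_down (hp : 3 ≤ p) (i n m : ZMod p) :
    cnj (uu p i n) (zz p (i - 1) m) = uu p i (n + 1) * (uu p i 1)⁻¹ := by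
  have h0 : cnj (Xg p i) (zz p (i - 1) m) = zz p i 1 := by
    have := zz_shift hp i 0 m
    rw [zero_add] at this
    rw [← this, zz_zero]
  rw [uu, cnj_mul_left, cnj_inv_left, zz_shift hp, h0, uu, uu]
  group

lemma uu_conj_z_down_inv (hp : 3 ≤ p) (i n m : ZMod p) :
    cnj (uu p i n) ((zz p (i - 1) m)⁻¹) = uu p i (n - 1) * (uu p i (-1))⁻¹ := by
  have key : ∀ a : ZMod p, cnj (zz p i a) ((zz p (i - 1) m)⁻¹) = zz p i (a - 1) := by
    intro a
    have := zz_shift_inv hp i a m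
    rw [cnj, inv_inv, ← this]
  have h0 : cnj (Xg p i) ((zz p (i - 1) m)⁻¹) = zz p i (-1) := by
    have := key 0
    rwa [zz_zero, zero_sub] at this
  rw [uu, cnj_mul_left, cnj_inv_left, key, h0, uu, uu]
  group

lemma Mi_conj_mem_X (hp : 3 ≤ p) (i : ZMod p) :
    ∀ g ∈ Mi p i, cnj g (Xg p i) ∈ Mi p i := by
  apply conj_mem_closure
  rintro s ⟨n, k, rfl⟩
  rw [cg_conj_X hp]
  exact cg_mem i n (k + 1)

lemma Mi_conj_mem_X_inv (hp : 3 ≤ p) (i : ZMod p) :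
    ∀ g ∈ Mi p i, cnj g ((Xg p i)⁻¹) ∈ Mi p i := by
  apply conj_mem_closure
  rintro s ⟨n, k, rfl⟩
  rw [cg_conj_X_inv hp]
  exact cg_mem i n (k - 1)

lemma Mi_conj_mem_zz (hp : 3 ≤ p) (i m : ZMod p) :
    ∀ g ∈ Mi p i, cnj g (zz p i m) ∈ Mi p i := by
  intro g hg
  have hsplit : zz p i m = uu p i m * Xg p i := by rw [uu]; group
  rw [hsplit, cnj_mul_right]
  apply Mi_conj_mem_X hp
  rw [cnj]
  exact (Mi p i).mul_mem ((Mi p i).mul_mem ((Mi p i).inv_mem (uu_mem i m)) hg) (uu_mem i m)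

lemma Mi_conj_mem_zz_inv (hp : 3 ≤ p) (i m : ZMod p) :
    ∀ g ∈ Mi p i, cnj g ((zz p i m)⁻¹) ∈ Mi p i := by
  intro g hg
  have hsplit : (zz p i m)⁻¹ = (Xg p i)⁻¹ * (uu p i m)⁻¹ := by rw [uu]; group
  rw [hsplit, cnj_mul_right, cnj]
  refine (Mi p i).mul_mem ((Mi p i).mul_mem ((Mi p i).inv_mem ?_) ?_) ?_
  · exact (Mi p i).inv_mem (uu_mem i m)
  · exact Mi_conj_mem_X_inv hp i g hg
  · exact (Mi p i).inv_mem (uu_mem i m)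

lemma Mi_conj_mem_zz_pow (hp : 3 ≤ p) (i m : ZMod p) (r : ℕ) :
    ∀ g ∈ Mi p i, cnj g ((zz p i m) ^ r) ∈ Mi p i := by
  induction r with
  | zero => intro g hg; simpa using hg
  | succ s ih =>
      intro g hg
      rw [pow_succ, cnj_mul_right]
      exact Mi_conj_mem_zz hp i m _ (ih g hg)

lemma cg_conj_Xm (hp : 3 ≤ p) (i n k : ZMod p) :
    cnj (cg p i n k) (Xg p (i - 1)) ∈ Mi p i := by
  have hz1 : zz p i 1 = cnj (Xg p i) (Xg p (i - 1)) := by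
    rw [zz, zpw_one hp]
  have hA : zpw (Xg p i) k * Xg p (i - 1) = Xg p (i - 1) * (zz p i 1) ^ k.val := by
    rw [hz1, ← cnj_pow_left, cnj, zpw]
    group
  rw [cg, ← cnj_mul_right, hA, cnj_mul_right]
  have h1 : cnj (uu p i n) (Xg p (i - 1)) = uu p i (n + 1) * (uu p i 1)⁻¹ := by
    have := uu_conj_z_down hp i n 0
    rwa [zz_zero] at this
  rw [h1]
  apply Mi_conj_mem_zz_pow hp
  exact (Mi p i).mul_mem (uu_mem i (n + 1)) ((Mi p i).inv_mem (uu_mem i 1))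

lemma cg_conj_Xm_inv (hp : 3 ≤ p) (i n k : ZMod p) :
    cnj (cg p i n k) ((Xg p (i - 1))⁻¹) ∈ Mi p i := by
  have hzm1 : zz p i (-1) = cnj (Xg p i) ((Xg p (i - 1))⁻¹) := by
    have := zz_shift_inv hp i 0 0
    rw [zz_zero, zero_sub] at this
    rw [← this, cnj, inv_inv, zz_zero]
  have hA : zpw (Xg p i) k * (Xg p (i - 1))⁻¹ = (Xg p (i - 1))⁻¹ * (zz p i (-1)) ^ k.val := by
    rw [hzm1, ← cnj_pow_left, cnj, zpw]
    group
  rw [cg, ← cnj_mul_right, hA, cnj_mul_right]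
  have h1 : cnj (uu p i n) ((Xg p (i - 1))⁻¹) = uu p i (n - 1) * (uu p i (-1))⁻¹ := by
    have := uu_conj_z_down_inv hp i n 0
    rwa [zz_zero] at this
  rw [h1]
  apply Mi_conj_mem_zz_pow hp
  exact (Mi p i).mul_mem (uu_mem i (n - 1)) ((Mi p i).inv_mem (uu_mem i (-1)))

/-- conjugation of a generator of `Mᵢ` by any `xⱼ^{±1}` stays in `Mᵢ`. -/
lemma cg_conj_any (hp : 3 ≤ p) (i j n k : ZMod p) :
    cnj (cg p i n k) (Xg p j) ∈ Mi p i ∧ cnj (cg p i n k) ((Xg p j)⁻¹) ∈ Mi p i := by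
  by_cases hji : j = i
  · subst hji
    rw [cg_conj_X hp, cg_conj_X_inv hp]
    exact ⟨cg_mem _ n (k + 1), cg_mem _ n (k - 1)⟩
  · by_cases hjm : j = i - 1
    · subst hjm
      exact ⟨cg_conj_Xm hp i n k, cg_conj_Xm_inv hp i n k⟩
    · have hcomm : Commute (Xg p j) (cg p i n k) := by
        by_cases hju : j = i + 1
        · subst hju
          have := zz_comm_cg_up hp i 0 n k
          rwa [zz_zero] at this
        · have h0 : i - j ≠ 0 := fun e => hji (by
            rw [show j = i - (i - j) from by ring, e]; ring)
          have h1' : i - j ≠ 1 := fun e => hjm (by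
            rw [show j = i - (i - j) from by ring, e])
          have hm1' : i - j ≠ -1 := fun e => hju (by
            rw [show j = i - (i - j) from by ring, e]; ring)
          have := zz_comm_cg_far hp h0 h1' hm1' 0 n k
          rwa [zz_zero] at this
      exact ⟨by rw [cnj_of_commute hcomm]; exact cg_mem i n k,
        by rw [cnj_of_commute hcomm.inv_left]; exact cg_mem i n k⟩

lemma Qgrp_top : Subgroup.closure (Set.range (Xg p)) = ⊤ := by
  rw [Subgroup.eq_top_iff']
  intro q
  induction q using QuotientGroup.induction_on with
  | H w =>
    show πQ p w ∈ _
    induction w using FreeGroup.induction_on with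
    | C1 => rw [map_one]; exact Subgroup.one_mem _
    | of x => exact Subgroup.subset_closure ⟨x, rfl⟩
    | inv_of x hx => rw [map_inv]; exact Subgroup.inv_mem _ hx
    | mul x y hx hy => rw [map_mul]; exact Subgroup.mul_mem _ hx hy

lemma Mall_conj (hp : 3 ≤ p) (j : ZMod p) :
    (∀ g ∈ Mall p, cnj g (Xg p j) ∈ Mall p) ∧
    (∀ g ∈ Mall p, cnj g ((Xg p j)⁻¹) ∈ Mall p) := by
  constructor
  · apply conj_mem_closure
    rintro s hs
    rcases Set.mem_iUnion.mp hs with ⟨i, n, k, rfl⟩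
    exact Mi_le_Mall i (cg_conj_any hp i j n k).1
  · apply conj_mem_closure
    rintro s hs
    rcases Set.mem_iUnion.mp hs with ⟨i, n, k, rfl⟩
    exact Mi_le_Mall i (cg_conj_any hp i j n k).2

lemma Mall_normal (hp : 3 ≤ p) : (Mall p).Normal := by
  rw [← Subgroup.normalizer_eq_top_iff]
  rw [← top_le_iff, ← Qgrp_top, Subgroup.closure_le]
  rintro x ⟨j, rfl⟩
  show Xg p j ∈ Subgroup.normalizer (Mall p : Set (Qgrp p))
  rw [Subgroup.mem_normalizer_iff]
  intro h
  constructor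
  · intro hh
    have := (Mall_conj hp j).2 h hh
    rwa [cnj, inv_inv] at this
  · intro hh
    have := (Mall_conj hp j).1 _ hh
    rw [cnj] at this
    have e : (Xg p j)⁻¹ * (Xg p j * h * (Xg p j)⁻¹) * Xg p j = h := by group
    rwa [e] at this

/-- the subgroups `Mᵢ` pairwise commute. -/
lemma Mi_comm_base (hp : 3 ≤ p) {i j : ZMod p} (hji : j ≠ i) (hjm : j ≠ i - 1) :
    ∀ h ∈ Mi p j, ∀ g ∈ Mi p i, Commute h g := by
  have step1 : ∀ b : ZMod p, ∀ g ∈ Mi p i, Commute (zz p j b) g := by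
    intro b g hg
    induction hg using Subgroup.closure_induction with
    | mem x hx =>
        rcases hx with ⟨n, k, rfl⟩
        by_cases hju : j = i + 1
        · subst hju; exact zz_comm_cg_up hp i b n k
        · have h0 : i - j ≠ 0 := fun e => hji (by
            rw [show j = i - (i - j) from by ring, e]; ring)
          have h1' : i - j ≠ 1 := fun e => hjm (by
            rw [show j = i - (i - j) from by ring, e])
          have hm1' : i - j ≠ -1 := fun e => hju (by
            rw [show j = i - (i - j) from by ring, e]; ring)
          exact zz_comm_cg_far hp h0 h1' hm1' b n k
    | one => exact Commute.one_right _
    | mul x y _ _ hx hy => exact hx.mul_right hy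
    | inv x _ hx => exact hx.inv_right
  intro h hh g hg
  induction hh using Subgroup.closure_induction with
  | mem x hx =>
      rcases hx with ⟨n, k, rfl⟩
      have hXj : Commute (Xg p j) g := by
        have := step1 0 g hg
        rwa [zz_zero] at this
      rw [cg, cnj, uu, zpw, mul_assoc]
      exact ((hXj.pow_left k.val).inv_left.mul_left
        (((step1 n g hg).mul_left hXj.inv_left).mul_left (hXj.pow_left k.val)))
  | one => exact Commute.one_left _
  | mul x y _ _ hx hy => exact hx.mul_left hy
  | inv x _ hx => exact hx.inv_left

lemma Mi_comm (hp : 3 ≤ p) {i j : ZMod p} (hij : i ≠ j) :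
    ∀ g ∈ Mi p i, ∀ h ∈ Mi p j, Commute g h := by
  by_cases hjm : j = i - 1
  · intro g hg h hh
    have h2 := two_ne_zero' hp
    have hij' : i ≠ j := hij
    have hijm : i ≠ j - 1 := by
      subst hjm
      intro e
      exact h2 (by
        have : i - (i - 1 - 1) = 0 := by rw [← e]; ring
        calc (2 : ZMod p) = i - (i - 1 - 1) := by ring
        _ = 0 := this)
    exact Mi_comm_base hp (i := j) (j := i) hij' hijm g hg h hh
  · intro g hg h hh
    exact ((Mi_comm_base hp (fun e => hij e.symm) hjm) h hh g hg).symm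

lemma Mi_le_pair (hp : 3 ≤ p) (i : ZMod p) :
    Mi p i ≤ Subgroup.closure {Xg p (i - 1), Xg p i} := by
  rw [Mi, Subgroup.closure_le]
  rintro x ⟨n, k, rfl⟩
  set K := Subgroup.closure {Xg p (i - 1), Xg p i} with hK
  have hXm : Xg p (i - 1) ∈ K := Subgroup.subset_closure (Or.inl rfl)
  have hXi : Xg p i ∈ K := Subgroup.subset_closure (Or.inr rfl)
  have hzz : ∀ a : ZMod p, zz p i a ∈ K := by
    intro a
    rw [zz, cnj, zpw]
    exact K.mul_mem (K.mul_mem (K.inv_mem (K.pow_mem hXm _)) hXi) (K.pow_mem hXm _)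
  show cg p i n k ∈ K
  rw [cg, cnj, uu, zpw]
  exact K.mul_mem (K.mul_mem (K.inv_mem (K.pow_mem hXi _))
    (K.mul_mem (hzz n) (K.inv_mem hXi))) (K.pow_mem hXi _)

end Msub


section PhiQ

open Subgroup

variable {p : ℕ}

/-- `N ≤ ker (lift σ)`. -/
lemma ncl_le_ker (hp : 3 ≤ p) :
    Subgroup.normalClosure (PhiDeltaRels p) ≤
      (FreeGroup.lift (σt p) : FreeGroup (ZMod p) →* (ZMod p → Gam p)).ker :=
  Subgroup.normalClosure_le_normal (fun w hw => rels_sub hp w hw)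

/-- The induced map `Q → Γᵖ`. -/
def φQ (hp : 3 ≤ p) : Qgrp p →* (ZMod p → Gam p) :=
  QuotientGroup.lift _ (FreeGroup.lift (σt p)) (fun w hw => ncl_le_ker hp hw)

lemma φQ_π (hp : 3 ≤ p) (w : FreeGroup (ZMod p)) :
    φQ hp (πQ p w) = FreeGroup.lift (σt p) w := rfl

lemma φQ_X (hp : 3 ≤ p) (l : ZMod p) : φQ hp (Xg p l) = σt p l := by
  rw [Xg, φQ_π, FreeGroup.lift_apply_of]

/-- evaluation of `φQ` at coordinate `j`. -/
def evq (hp : 3 ≤ p) (j : ZMod p) : Qgrp p →* Gam p :=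
  (Pi.evalMonoidHom (fun _ : ZMod p => Gam p) j).comp (φQ hp)

lemma evq_X (hp : 3 ≤ p) (j l : ZMod p) :
    evq hp j (Xg p l) = if j = l then ρΓ p else if j = l + 1 then αΓ p else 1 := by
  rw [evq, MonoidHom.comp_apply, φQ_X]
  exact σt_apply hp l j

lemma evq_zz (hp : 3 ≤ p) (j i n : ZMod p) :
    evq hp j (zz p i n) = cnj (evq hp j (Xg p i)) ((evq hp j (Xg p (i - 1))) ^ n.val) := by
  rw [zz, map_cnj, zpw, map_pow]

lemma evq_uu_ne (hp : 3 ≤ p) {j i : ZMod p} (hji : j ≠ i) (n : ZMod p) :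
    evq hp j (uu p i n) = 1 := by
  rw [uu, map_mul, map_inv, evq_zz hp]
  by_cases hjm : j = i - 1
  · have ha : evq hp j (Xg p i) = 1 := by
      rw [evq_X hp, if_neg hji, if_neg]
      subst hjm
      exact zmod_index_ne hp (two_ne_zero' hp) (by ring)
    rw [ha, cnj_one_left, inv_one, mul_one]
  · have hb : evq hp j (Xg p (i - 1)) = 1 := by
      rw [evq_X hp, if_neg hjm, if_neg]
      intro e
      exact hji (by rw [e]; ring)
    rw [hb, one_pow, cnj_one, mul_inv_cancel]

lemma evq_cg_ne (hp : 3 ≤ p) {j i : ZMod p} (hji : j ≠ i) (n k : ZMod p) :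
    evq hp j (cg p i n k) = 1 := by
  rw [cg, map_cnj, evq_uu_ne hp hji, cnj_one_left]

/-- the character `Q → ℤ/p` counting `x_k`. -/
def χφ (hp : 3 ≤ p) (k : ZMod p) : Qgrp p →* Multiplicative (ZMod p) :=
  (θρ p).comp (evq hp k)

lemma χφ_X (hp : 3 ≤ p) (k l : ZMod p) :
    χφ hp k (Xg p l) = if k = l then Multiplicative.ofAdd (1 : ZMod p) else 1 := by
  rw [χφ, MonoidHom.comp_apply, evq_X hp]
  by_cases h1 : k = l
  · rw [if_pos h1, if_pos h1, θρ_rho]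
  · rw [if_neg h1, if_neg h1]
    by_cases h2 : k = l + 1
    · rw [if_pos h2, θρ_alpha]
    · rw [if_neg h2, map_one]

lemma cnj_comm_eq {C : Type*} [CommGroup C] (a b : C) : cnj a b = a := by
  rw [cnj, mul_comm b⁻¹ a, mul_assoc, inv_mul_cancel, mul_one]

lemma χφ_cg (hp : 3 ≤ p) (k i n m : ZMod p) : χφ hp k (cg p i n m) = 1 := by
  rw [cg, map_cnj, cnj_comm_eq, uu, map_mul, map_inv, zz, map_cnj, cnj_comm_eq,
    mul_inv_cancel]

lemma χφ_Mall (hp : 3 ≤ p) : ∀ g ∈ Mall p, ∀ k, χφ hp k g = 1 := by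
  intro g hg
  induction hg using Subgroup.closure_induction with
  | mem x hx =>
      intro k
      rcases Set.mem_iUnion.mp hx with ⟨i, n, m, rfl⟩
      exact χφ_cg hp k i n m
  | one => intro k; exact map_one _
  | mul x y _ _ hx hy => intro k; rw [map_mul, hx k, hy k, mul_one]
  | inv x _ hx => intro k; rw [map_inv, hx k, inv_one]

def fτ (p : ℕ) (i : ZMod p) : Fin 2 → Qgrp p := ![Xg p (i - 1), Xg p i]

lemma hτ (p : ℕ) (i : ZMod p) : ∀ r ∈ CpCpRels p, FreeGroup.lift (fτ p i) r = 1 := by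
  intro r hr
  rcases hr with h | h <;> subst h <;> rw [map_pow, FreeGroup.lift_apply_of]
  · show Xg p (i - 1) ^ p = 1
    exact Xg_pow (i - 1)
  · show Xg p i ^ p = 1
    exact Xg_pow i

/-- the splitting `Γ → Q`, `α ↦ x_{i-1}`, `ρ ↦ xᵢ`. -/
def τQ (p : ℕ) (i : ZMod p) : Gam p →* Qgrp p := PresentedGroup.toGroup (hτ p i)

lemma τQ_α (i : ZMod p) : τQ p i (αΓ p) = Xg p (i - 1) := by
  show PresentedGroup.toGroup (hτ p i) (PresentedGroup.of 0) = _
  rw [PresentedGroup.toGroup.of]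
  rfl

lemma τQ_ρ (i : ZMod p) : τQ p i (ρΓ p) = Xg p i := by
  show PresentedGroup.toGroup (hτ p i) (PresentedGroup.of 1) = _
  rw [PresentedGroup.toGroup.of]
  rfl

/-- `τᵢ ∘ evqᵢ` is the identity on `Mᵢ`. -/
lemma retract (hp : 3 ≤ p) (i : ZMod p) : ∀ g ∈ Mi p i, τQ p i (evq hp i g) = g := by
  have heq : Set.EqOn (⇑((τQ p i).comp (evq hp i))) (⇑(MonoidHom.id (Qgrp p)))
      {Xg p (i - 1), Xg p i} := by
    rintro x (rfl | rfl)
    · show τQ p i (evq hp i (Xg p (i - 1))) = Xg p (i - 1)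
      have : evq hp i (Xg p (i - 1)) = αΓ p := by
        rw [evq_X hp, if_neg, if_pos (by ring)]
        exact zmod_index_ne hp (neg_one_ne_zero' hp) (by ring)
      rw [this, τQ_α]
    · show τQ p i (evq hp i (Xg p i)) = Xg p i
      have : evq hp i (Xg p i) = ρΓ p := by
        rw [evq_X hp, if_pos rfl]
      rw [this, τQ_ρ]
  have hcl := MonoidHom.eqOn_closure heq
  intro g hg
  exact hcl (Mi_le_pair hp i hg)

lemma Mi_inj (hp : 3 ≤ p) (i : ZMod p) :
    ∀ g ∈ Mi p i, φQ hp g = 1 → g = 1 := by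
  intro g hg h1
  have := retract hp i g hg
  rw [evq, MonoidHom.comp_apply, h1] at this
  simpa using this.symm

end PhiQ


section Decomp

open Subgroup

variable {p : ℕ}

/-- hom `ℤ/p → G` from an element of order dividing `p`. -/
def zmodhom (hp : 3 ≤ p) {G : Type*} [Group G] (g : G) (hg : g ^ p = 1) :
    Multiplicative (ZMod p) →* G :=
  haveI : NeZero p := ⟨by omega⟩
  MonoidHom.mk' (fun x => g ^ (Multiplicative.toAdd x).val) (by
    intro x y
    show g ^ ((Multiplicative.toAdd x + Multiplicative.toAdd y).val) = _
    rw [ZMod.val_add, ← pow_val_mod g hg, pow_add])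

lemma zmodhom_apply (hp : 3 ≤ p) {G : Type*} [Group G] (g : G) (hg : g ^ p = 1)
    (x : Multiplicative (ZMod p)) :
    zmodhom hp g hg x = g ^ (Multiplicative.toAdd x).val := rfl

/-- commutators of generators lie in `Mall`. -/
lemma comm_barX (hp : 3 ≤ p) (i j : ZMod p) :
    Xg p i * Xg p j * (Xg p i)⁻¹ * (Xg p j)⁻¹ ∈ Mall p := by
  by_cases hij : i = j
  · subst hij
    have : Xg p i * Xg p i * (Xg p i)⁻¹ * (Xg p i)⁻¹ = 1 := by group
    rw [this]; exact (Mall p).one_mem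
  · by_cases hji1 : j = i + 1
    · subst hji1
      have key : Xg p i * Xg p (i + 1) * (Xg p i)⁻¹ = zz p (i + 1) (-1) := by
        have h := zz_shift_inv hp (i + 1) 0 0
        rw [add_sub_cancel_right, zz_zero, zz_zero, zero_sub] at h
        exact h
      have : Xg p i * Xg p (i + 1) * (Xg p i)⁻¹ * (Xg p (i + 1))⁻¹ = uu p (i + 1) (-1) := by
        rw [key, uu]
      rw [this]
      exact Mi_le_Mall (i + 1) (uu_mem (i + 1) (-1))
    · by_cases hij1 : i = j + 1
      · subst hij1
        have key : Xg p (j + 1) * Xg p j = Xg p j * zz p (j + 1) 1 := by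
          have h := zz_shift hp (j + 1) 0 0
          rw [add_sub_cancel_right, zz_zero, zz_zero, zero_add, cnj] at h
          calc Xg p (j + 1) * Xg p j
              = Xg p j * ((Xg p j)⁻¹ * Xg p (j + 1) * Xg p j) := by group
            _ = Xg p j * zz p (j + 1) 1 := by rw [h]
        have expr : Xg p (j + 1) * Xg p j * (Xg p (j + 1))⁻¹ * (Xg p j)⁻¹ =
            Xg p j * (zz p (j + 1) 1 * (Xg p (j + 1))⁻¹) * (Xg p j)⁻¹ := by
          rw [← mul_assoc, ← key]
        rw [expr]
        have huu : zz p (j + 1) 1 * (Xg p (j + 1))⁻¹ ∈ Mall p :=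
          Mi_le_Mall (j + 1) (uu_mem (j + 1) 1)
        haveI := Mall_normal hp
        exact Subgroup.Normal.conj_mem this _ huu (Xg p j)
      · have h0 : i - j ≠ 0 := fun e => hij (by
          rw [show i = j + (i - j) from by ring, e]; ring)
        have h1 : i - j ≠ 1 := fun e => hij1 (by
          rw [show i = j + (i - j) from by ring, e])
        have hm1 : i - j ≠ -1 := fun e => hji1 (by
          rw [show j = i - (i - j) from by ring, e]; ring)
        have hc := comm_far hp h0 h1 hm1 0 0
        rw [zz_zero, zz_zero] at hc
        have : Xg p i * Xg p j * (Xg p i)⁻¹ * (Xg p j)⁻¹ = 1 := by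
          rw [hc.eq]; group
        rw [this]; exact (Mall p).one_mem

/-- `Finset.noncommProd` as an ordered list product over `univ.toList`. -/
lemma noncommProd_list {α β : Type*} [Monoid β] [DecidableEq α] (s : Finset α) (f : α → β)
    (comm : (↑s : Set α).Pairwise fun a b => Commute (f a) (f b)) :
    s.noncommProd f comm = (s.toList.map f).prod := by
  have h := Finset.noncommProd_toFinset s.toList f (by
    rw [Finset.toList_toFinset]; exact comm) (Finset.nodup_toList s)
  rw [← h]
  congr 1
  · rw [Finset.toList_toFinset]

lemma list_prod_eq_single {ι β : Type*} [Monoid β] :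
    ∀ (l : List ι) (f : ι → β) (k : ι), k ∈ l → l.Nodup →
      (∀ i ∈ l, i ≠ k → f i = 1) → (l.map f).prod = f k := by
  intro l
  induction l with
  | nil => intro f k hk; simp at hk
  | cons x t ih =>
      intro f k hk hnd hone
      rcases List.mem_cons.mp hk with rfl | hkt
      · have ht : ∀ i ∈ t, f i = 1 := by
          intro i hi
          apply hone i (List.mem_cons_of_mem _ hi)
          intro e
          subst e
          exact (List.nodup_cons.mp hnd).1 hi
        rw [List.map_cons, List.prod_cons, List.prod_eq_one, mul_one]
        intro y hy
        rcases List.mem_map.mp hy with ⟨i, hi, rfl⟩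
        exact ht i hi
      · have hx : f x = 1 := hone x List.mem_cons_self (by
          intro e; subst e; exact (List.nodup_cons.mp hnd).1 hkt)
        rw [List.map_cons, List.prod_cons, hx, one_mul]
        exact ih f k hkt (List.nodup_cons.mp hnd).2 (fun i hi hik =>
          hone i (List.mem_cons_of_mem _ hi) hik)

/-- the reference ordered product `∏ᵢ xᵢ^{aᵢ}`. -/
noncomputable def tprod (p : ℕ) [NeZero p] (a : ZMod p → ZMod p) : Qgrp p :=
  ((Finset.univ : Finset (ZMod p)).toList.map (fun i => zpw (Xg p i) (a i))).prod

lemma tprod_zero (hp : 3 ≤ p) : haveI : NeZero p := ⟨by omega⟩; tprod p (0 : ZMod p → ZMod p) = 1 := by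
  haveI : NeZero p := ⟨by omega⟩
  rw [tprod, List.prod_eq_one]
  intro x hx
  rcases List.mem_map.mp hx with ⟨i, _, rfl⟩
  rw [Pi.zero_apply, zpw_zero]

/-- every element of `Q` decomposes as `g · ∏ xᵢ^{aᵢ}` with `g ∈ Mall`. -/
lemma decomp (hp : 3 ≤ p) (q : Qgrp p) :
    haveI : NeZero p := ⟨by omega⟩
    ∃ g ∈ Mall p, ∃ a : ZMod p → ZMod p, q = g * tprod p a := by
  haveI : NeZero p := ⟨by omega⟩
  letI : (Mall p).Normal := Mall_normal hp
  set πb : Qgrp p →* Qgrp p ⧸ Mall p := QuotientGroup.mk' (Mall p) with hπb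
  have hXpow : ∀ i : ZMod p, (πb (Xg p i)) ^ p = 1 := by
    intro i
    rw [← map_pow, Xg_pow, map_one]
  have hcomm : ∀ i j : ZMod p, Commute (πb (Xg p i)) (πb (Xg p j)) := by
    intro i j
    have hm := comm_barX hp i j
    have : πb (Xg p i * Xg p j * (Xg p i)⁻¹ * (Xg p j)⁻¹) = 1 :=
      (QuotientGroup.eq_one_iff _).mpr hm
    rw [map_mul, map_mul, map_mul, map_inv, map_inv] at this
    have h2 : πb (Xg p i) * πb (Xg p j) = πb (Xg p j) * πb (Xg p i) := by
      calc πb (Xg p i) * πb (Xg p j)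
          = (πb (Xg p i) * πb (Xg p j) * (πb (Xg p i))⁻¹ * (πb (Xg p j))⁻¹) *
            (πb (Xg p j) * πb (Xg p i)) := by group
        _ = πb (Xg p j) * πb (Xg p i) := by rw [this]; group
    exact h2
  let hhom : ∀ _i : ZMod p, Multiplicative (ZMod p) →* (Qgrp p ⧸ Mall p) := fun i =>
    zmodhom hp (πb (Xg p i)) (hXpow i)
  have hpair : Pairwise fun i j =>
      ∀ (x y : Multiplicative (ZMod p)), Commute (hhom i x) (hhom j y) := by
    intro i j _ x y
    rw [zmodhom_apply, zmodhom_apply]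
    exact (hcomm i j).pow_pow _ _
  set H := MonoidHom.noncommPiCoprod hhom hpair with hH
  have hrange : H.range = ⊤ := by
    rw [← top_le_iff]
    have htop : Subgroup.closure (Set.range fun i => πb (Xg p i)) = ⊤ := by
      rw [Subgroup.eq_top_iff']
      intro qb
      obtain ⟨q', rfl⟩ := QuotientGroup.mk'_surjective (Mall p) qb
      have : q' ∈ Subgroup.closure (Set.range (Xg p)) := by
        rw [Qgrp_top]; trivial
      induction this using Subgroup.closure_induction with
      | mem x hx =>
          rcases hx with ⟨l, rfl⟩
          exact Subgroup.subset_closure ⟨l, rfl⟩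
      | one => rw [map_one]; exact Subgroup.one_mem _
      | mul x y _ _ hx hy => rw [map_mul]; exact Subgroup.mul_mem _ hx hy
      | inv x _ hx => rw [map_inv]; exact Subgroup.inv_mem _ hx
    rw [← htop, Subgroup.closure_le]
    rintro x ⟨l, rfl⟩
    refine ⟨Pi.mulSingle l (Multiplicative.ofAdd (1 : ZMod p)), ?_⟩
    rw [hH, MonoidHom.noncommPiCoprod_mulSingle, zmodhom_apply]
    show πb (Xg p l) ^ (1 : ZMod p).val = πb (Xg p l)
    haveI : Fact (1 < p) := ⟨by omega⟩
    rw [ZMod.val_one, pow_one]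
  have hsurj : ∀ qb : Qgrp p ⧸ Mall p, ∃ av, H av = qb := by
    intro qb
    have : qb ∈ H.range := by rw [hrange]; trivial
    exact this
  obtain ⟨av, hav⟩ := hsurj (πb q)
  set a : ZMod p → ZMod p := fun i => Multiplicative.toAdd (av i) with ha
  have hπt : πb (tprod p a) = H av := by
    rw [tprod, map_list_prod, List.map_map, hH, MonoidHom.noncommPiCoprod_apply,
      noncommProd_list]
    congr 1
  refine ⟨q * (tprod p a)⁻¹, (QuotientGroup.eq_one_iff _).mp ?_, a, by group⟩
  show πb (q * (tprod p a)⁻¹) = 1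
  rw [map_mul, map_inv, hπt, hav, mul_inv_cancel]

end Decomp

section Final

open Subgroup

variable {p : ℕ}

lemma χφ_tprod (hp : 3 ≤ p) (k : ZMod p) (a : ZMod p → ZMod p) :
    haveI : NeZero p := ⟨by omega⟩
    χφ hp k (tprod p a) = Multiplicative.ofAdd (a k) := by
  haveI : NeZero p := ⟨by omega⟩
  rw [tprod, map_list_prod, List.map_map]
  have hval : ∀ i : ZMod p, (χφ hp k ∘ fun i => zpw (Xg p i) (a i)) i =
      (χφ hp k (Xg p i)) ^ (a i).val := by
    intro i
    show χφ hp k (zpw (Xg p i) (a i)) = _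
    rw [zpw, map_pow]
  have := list_prod_eq_single (Finset.univ : Finset (ZMod p)).toList
    (χφ hp k ∘ fun i => zpw (Xg p i) (a i)) k
    (Finset.mem_toList.mpr (Finset.mem_univ k)) (Finset.nodup_toList _) ?side
  · rw [this, hval, χφ_X hp, if_pos rfl]
    have h1 : (Multiplicative.ofAdd (1 : ZMod p)) ^ (a k).val =
        Multiplicative.ofAdd (((a k).val : ZMod p)) := by
      rw [← ofAdd_nsmul]
      congr 1
      rw [nsmul_eq_mul, mul_one]
    rw [h1, ZMod.natCast_rightInverse (a k)]
  · intro i _ hik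
    rw [hval, χφ_X hp, if_neg (fun e => hik (by rw [e])), one_pow]

lemma evq_Mi_ne (hp : 3 ≤ p) {j i : ZMod p} (hji : j ≠ i) :
    ∀ x ∈ Mi p i, evq hp j x = 1 := by
  intro x hx
  induction hx using Subgroup.closure_induction with
  | mem y hy => rcases hy with ⟨n, m, rfl⟩; exact evq_cg_ne hp hji n m
  | one => exact map_one _
  | mul x y _ _ hx hy => rw [map_mul, hx, hy, mul_one]
  | inv x _ hx => rw [map_inv, hx, inv_one]

lemma Mall_eq_iSup : Mall p = ⨆ i, Mi p i := by
  rw [Mall, Subgroup.closure_iUnion]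
  rfl

/-- main injectivity: `φQ` is injective. -/
lemma phiQ_inj (hp : 3 ≤ p) (q : Qgrp p) (hq : φQ hp q = 1) : q = 1 := by
  haveI : NeZero p := ⟨by omega⟩
  obtain ⟨g, hg, a, rfl⟩ := decomp hp q
  -- step 1: the exponents vanish
  have hak : ∀ k, a k = 0 := by
    intro k
    have he : evq hp k (g * tprod p a) = 1 := by
      rw [evq, MonoidHom.comp_apply, hq]
      rfl
    have h1 : χφ hp k (g * tprod p a) = 1 := by
      rw [χφ, MonoidHom.comp_apply, he, map_one]
    rw [map_mul, χφ_Mall hp g hg k, one_mul, χφ_tprod hp] at h1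
    have := Multiplicative.ofAdd.injective (h1.trans (ofAdd_zero).symm)
    exact this
  have ht1 : tprod p a = 1 := by
    have : a = 0 := funext hak
    rw [this]
    exact tprod_zero hp
  rw [ht1, mul_one] at hq ⊢
  -- step 2: extract the components of g
  have hcommMi : Pairwise fun i j : ZMod p =>
      ∀ x y : Qgrp p, x ∈ Mi p i → y ∈ Mi p j → Commute x y := by
    intro i j hij
    intro x y hx hy
    exact Mi_comm hp hij x hx y hy
  set κ := Subgroup.noncommPiCoprod hcommMi with hκ
  have hgr : g ∈ κ.range := by
    rw [hκ, Subgroup.noncommPiCoprod_range]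
    rw [Mall_eq_iSup] at hg
    exact hg
  obtain ⟨vec, hvec⟩ := hgr
  have happ : ∀ (f : Qgrp p →* Gam p), f g =
      ((Finset.univ : Finset (ZMod p)).toList.map (fun i => f (vec i : Qgrp p))).prod := by
    intro f
    rw [← hvec, hκ, Subgroup.noncommPiCoprod_apply]
    refine (Finset.map_noncommProd _ _ _ f).trans ?_
    refine (noncommProd_list _ _ _).trans ?_
    rfl
  have hvj : ∀ j, (vec j : Qgrp p) = 1 := by
    intro j
    have hevq : ∀ j' : ZMod p, j' ≠ j → evq hp j' (vec j : Qgrp p) = 1 := by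
      intro j' hj'
      exact evq_Mi_ne hp hj' _ (vec j).2
    have hj1 : evq hp j (vec j : Qgrp p) = 1 := by
      have hone : evq hp j g = 1 := by
        rw [evq, MonoidHom.comp_apply, hq]
        rfl
      rw [happ (evq hp j)] at hone
      rw [← hone]
      exact (list_prod_eq_single _ _ j (Finset.mem_toList.mpr (Finset.mem_univ j))
        (Finset.nodup_toList _) (fun i _ hij =>
          evq_Mi_ne hp (Ne.symm hij) _ (vec i).2)).symm
    apply Mi_inj hp j _ (vec j).2
    funext j'
    by_cases hj' : j' = j
    · subst hj'
      exact hj1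
    · exact hevq j' hj'
  have : g = 1 := by
    rw [← hvec, hκ, Subgroup.noncommPiCoprod_apply]
    refine (noncommProd_list _ _ _).trans ?_
    rw [List.prod_eq_one]
    intro x hx
    rcases List.mem_map.mp hx with ⟨i, _, rfl⟩
    exact hvj i
  exact this

end Final

end PhiDeltaAux

/-- The subgroup `⟨σ₀, …, σ_{p-1}⟩` of `Γ^p` is isomorphic,
via `xᵢ ↦ σᵢ`, to the group presented on `x₀, …, x_{p-1}` by the relators of
`PhiDeltaRels`; equivalently, the kernel of the homomorphism
`FreeGroup (ℤ/pℤ) → Γ^p`, `xᵢ ↦ σᵢ`, is the normal closure of those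
relators. -/
theorem PhiDelta_presentation (p : ℕ) (hp : 3 ≤ p) :
    (FreeGroup.lift (σt p) : FreeGroup (ZMod p) →* (ZMod p → Gam p)).ker =
      Subgroup.normalClosure (PhiDeltaRels p) := by
  apply le_antisymm
  · intro w hw
    rw [MonoidHom.mem_ker] at hw
    have h1 : PhiDeltaAux.πQ p w = 1 :=
      PhiDeltaAux.phiQ_inj hp (PhiDeltaAux.πQ p w)
        (by rw [PhiDeltaAux.φQ_π]; exact hw)
    exact (PhiDeltaAux.πQ_eq_one_iff w).mp h1
  · exact PhiDeltaAux.ncl_le_ker hp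
end

section
/- In Γ^p, for every i ∈ ℤ/pℤ and n ≥ 0 one has σᵢ^{αᵢⁿ} = σᵢ^{σ_{i-1}ⁿ}; consequently, for all m, n ≥ 0, [σᵢ^{σ_{i-1}ⁿ}, σⱼ^{σ_{j-1}^m}] = 1 whenever 2 ≤ |i−j| ≤ p−2, and σᵢ^{σ_{i-1}^{n+1}} = σᵢ^{σ_{i-1}ⁿ·σ_{i-1}^{σ_{i-2}^m}} (indices mod p). -/
lemma cnj_apply {p : ℕ} (g h : ZMod p → Gam p) (k : ZMod p) :
    cnj g h k = cnj (g k) (h k) := rfl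

lemma pbra_apply {p : ℕ} (g h : ZMod p → Gam p) (k : ZMod p) :
    pbra g h k = pbra (g k) (h k) := rfl

lemma cnj_one_left {G : Type*} [Group G] (h : G) : cnj 1 h = 1 := by simp [cnj]

lemma pbra_one_left {G : Type*} [Group G] (h : G) : pbra 1 h = 1 := by
  simp [pbra, mul_assoc]

lemma pbra_one_right {G : Type*} [Group G] (h : G) : pbra h 1 = 1 := by
  simp [pbra]

lemma σ_apply (p : ℕ) (i k : ZMod p) :
    σt p i k = (if k = i then ρΓ p else 1) * (if k = i + 1 then αΓ p else 1) := by
  simp [σt, ρt, αt, Pi.mulSingle_apply, Pi.mul_apply]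

lemma zmod_two_ne_zero (p : ℕ) (hp : 3 ≤ p) : (2 : ZMod p) ≠ 0 := by
  have : ((2 : ℕ) : ZMod p) ≠ 0 := by
    rw [Ne, ZMod.natCast_eq_zero_iff]
    intro h
    have := Nat.le_of_dvd (by norm_num) h
    omega
  simpa using this

lemma zmod_one_ne_zero (p : ℕ) (hp : 3 ≤ p) : (1 : ZMod p) ≠ 0 := by
  have : ((1 : ℕ) : ZMod p) ≠ 0 := by
    rw [Ne, ZMod.natCast_eq_zero_iff]
    intro h
    have := Nat.le_of_dvd (by norm_num) h
    omega
  simpa using this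

/-- In `Γ^p`, for every `i ∈ ℤ/pℤ` and `n ≥ 0` one has
`σᵢ^{αᵢⁿ} = σᵢ^{σ_{i-1}ⁿ}`; consequently, for all `m, n ≥ 0`,
`[σᵢ^{σ_{i-1}ⁿ}, σⱼ^{σ_{j-1}^m}] = 1` whenever `2 ≤ |i-j| ≤ p-2`
(equivalently `i - j ∉ {0, 1, -1}` in `ℤ/pℤ`), and
`σᵢ^{σ_{i-1}^{n+1}} = σᵢ^{σ_{i-1}ⁿ·σ_{i-1}^{σ_{i-2}^m}}` (indices mod `p`). -/
theorem sigma_iterated_relations_in_GammaPow (p : ℕ) (hp : 3 ≤ p) :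
    (∀ (i : ZMod p) (n : ℕ),
      cnj (σt p i) (αt p i ^ n) = cnj (σt p i) (σt p (i - 1) ^ n)) ∧
    (∀ (i j : ZMod p) (n m : ℕ), i - j ≠ 0 → i - j ≠ 1 → i - j ≠ -1 →
      pbra (cnj (σt p i) (σt p (i - 1) ^ n))
        (cnj (σt p j) (σt p (j - 1) ^ m)) = 1) ∧
    (∀ (i : ZMod p) (n m : ℕ),
      cnj (σt p i) (σt p (i - 1) ^ (n + 1)) =
        cnj (σt p i) (σt p (i - 1) ^ n *
          cnj (σt p (i - 1)) (σt p (i - 2) ^ m))) := by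
  have h1 := zmod_one_ne_zero p hp
  have h2 := zmod_two_ne_zero p hp
  refine ⟨?_, ?_, ?_⟩
  · intro i n
    funext k
    have e1 : i - 1 + 1 = i := by ring
    simp only [cnj_apply, Pi.pow_apply, σ_apply, αt, Pi.mulSingle_apply, e1]
    rcases eq_or_ne k i with hk | hki
    · subst hk
      have n1 : k ≠ k + 1 := fun h => h1 (by linear_combination -h)
      have n2 : k ≠ k - 1 := fun h => h1 (by linear_combination h)
      simp [n1, n2, cnj]
    · rcases eq_or_ne k (i + 1) with hk | hki1
      · subst hk
        have n1 : i + 1 ≠ i := fun h => h1 (by linear_combination h)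
        have n2 : i + 1 ≠ i - 1 := fun h => h2 (by linear_combination h)
        simp [n1, n2, cnj]
      · have n5 : i - 1 ≠ i + 1 := fun h => h2 (by linear_combination -h)
        by_cases hk2 : k = i - 1 <;> simp [hki, hki1, hk2, cnj, h1, n5]
  · intro i j n m hd0 hd1 hdm1
    funext k
    have hone : σt p i k = 1 ∨ σt p j k = 1 := by
      rcases eq_or_ne k i with hk | hki
      · subst hk
        right
        have nij : k ≠ j := fun h => hd0 (by rw [h]; ring)
        have nij1 : k ≠ j + 1 := fun h => hd1 (by rw [h]; ring)
        rw [σ_apply]; simp [nij, nij1]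
      · rcases eq_or_ne k (i + 1) with hk | hki1
        · subst hk
          right
          have nij : i + 1 ≠ j := fun h => hdm1 (by linear_combination h)
          have nij1 : i + 1 ≠ j + 1 := fun h => hd0 (by linear_combination h)
          rw [σ_apply]; simp [nij, nij1]
        · left
          rw [σ_apply]; simp [hki, hki1]
    simp only [Pi.one_apply, pbra_apply, cnj_apply, Pi.pow_apply]
    rcases hone with h | h
    · rw [h, cnj_one_left, pbra_one_left]
    · rw [h, cnj_one_left, pbra_one_right]
  · intro i n m
    funext k
    simp only [cnj_apply, Pi.pow_apply, Pi.mul_apply]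
    rcases eq_or_ne k i with hk | hki
    · subst hk
      have e1 : k - 1 + 1 = k := by ring
      have n1 : k ≠ k + 1 := fun h => h1 (by linear_combination -h)
      have n2 : k ≠ k - 1 := fun h => h1 (by linear_combination h)
      have n3 : k ≠ k - 2 := fun h => h2 (by linear_combination h)
      have n4 : k ≠ k - 2 + 1 := fun h => h1 (by linear_combination h)
      rw [σ_apply, σ_apply, σ_apply]
      simp only [e1, if_pos rfl, if_neg n1, if_neg n2, if_neg n3, if_neg n4,
        mul_one, one_mul]
      simp [cnj, pow_succ, mul_assoc]
    · rcases eq_or_ne k (i + 1) with hk | hki1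
      · subst hk
        have e1 : i - 1 + 1 = i := by ring
        have n1 : i + 1 ≠ i := fun h => h1 (by linear_combination h)
        have n2 : i + 1 ≠ i - 1 := fun h => h2 (by linear_combination h)
        rw [σ_apply, σ_apply]
        simp only [e1, if_neg n1, if_neg n2, if_pos rfl, mul_one, one_mul]
        simp [cnj]
      · have hk1 : σt p i k = 1 := by rw [σ_apply]; simp [hki, hki1]
        rw [hk1, cnj_one_left, cnj_one_left]
end

section
/- In the generalized Fabrykowski-Gupta group Γ_p, with sᵢ = r^{aⁱ} = a^{-i}·r·aⁱ for i ∈ ℤ/pℤ, the following relations hold: a^p = 1; [sᵢ^{s_{i-1}ⁿ}, sⱼ^{s_{j-1}^m}] = 1 whenever 2 ≤ |i−j| ≤ p−2 (indices mod p) and m, n ≥ 0; and sᵢ^{s_{i-1}^{n+1}} = sᵢ^{s_{i-1}ⁿ·s_{i-1}^{s_{i-2}^m}} for all i ∈ ℤ/pℤ and m, n ≥ 0. -/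
namespace SelfSim

variable (p : ℕ)

/-- The rooted-tree automorphism `a` : `a(xw) = (x+1)w`. -/
def aFun : List (ZMod p) → List (ZMod p)
  | [] => []
  | x :: w => (x + 1) :: w

def aInv : List (ZMod p) → List (ZMod p)
  | [] => []
  | x :: w => (x - 1) :: w

lemma aInv_aFun : ∀ l, aInv p (aFun p l) = l := by
  rintro (_ | ⟨x, w⟩) <;> simp [aFun, aInv]

lemma aFun_aInv : ∀ l, aFun p (aInv p l) = l := by
  rintro (_ | ⟨x, w⟩) <;> simp [aFun, aInv]

/-- `a` as a permutation of `X* = List (ZMod p)`. -/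
def a : Equiv.Perm (List (ZMod p)) where
  toFun := aFun p
  invFun := aInv p
  left_inv := aInv_aFun p
  right_inv := aFun_aInv p

/-- `r(0w) = 0 r(w)`, `r(1w) = 1 a(w)`, `r(xw) = xw` otherwise. -/
def rFun : List (ZMod p) → List (ZMod p)
  | [] => []
  | x :: w => if x = 0 then 0 :: rFun w else if x = 1 then 1 :: aFun p w else x :: w

def rInv : List (ZMod p) → List (ZMod p)
  | [] => []
  | x :: w => if x = 0 then 0 :: rInv w else if x = 1 then 1 :: aInv p w else x :: w

/-- `r` as a permutation of `X* = List (ZMod p)` (for `p ≥ 3`, so that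
`0 ≠ 1` in `ZMod p`). -/
def r (hp : 3 ≤ p) : Equiv.Perm (List (ZMod p)) where
  toFun := rFun p
  invFun := rInv p
  left_inv := by
    haveI : Fact (1 < p) := ⟨by omega⟩
    intro l
    induction l with
    | nil => rfl
    | cons x w ih =>
      by_cases h0 : x = 0
      · simp [rFun, rInv, h0, ih]
      · by_cases h1 : x = 1
        · simp [rFun, rInv, h0, h1, one_ne_zero, aInv_aFun]
        · simp [rFun, rInv, h0, h1]
  right_inv := by
    haveI : Fact (1 < p) := ⟨by omega⟩
    intro l
    induction l with
    | nil => rfl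
    | cons x w ih =>
      by_cases h0 : x = 0
      · simp [rFun, rInv, h0, ih]
      · by_cases h1 : x = 1
        · simp [rFun, rInv, h0, h1, one_ne_zero, aFun_aInv]
        · simp [rFun, rInv, h0, h1]

/-- `t(0w) = 0 t(w)`, `t(xw) = x aˣ(w)` for `x ≠ 0`. -/
def tFun : List (ZMod p) → List (ZMod p)
  | [] => []
  | x :: w => if x = 0 then 0 :: tFun w else x :: (aFun p)^[x.val] w

def tInv : List (ZMod p) → List (ZMod p)
  | [] => []
  | x :: w => if x = 0 then 0 :: tInv w else x :: (aInv p)^[x.val] w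

/-- `t` as a permutation of `X* = List (ZMod p)`. -/
def t : Equiv.Perm (List (ZMod p)) where
  toFun := tFun p
  invFun := tInv p
  left_inv := by
    intro l
    induction l with
    | nil => rfl
    | cons x w ih =>
      by_cases h0 : x = 0
      · simp [tFun, tInv, h0, ih]
      · simp [tFun, tInv, h0,
          (Function.LeftInverse.iterate (aInv_aFun p) x.val) w]
  right_inv := by
    intro l
    induction l with
    | nil => rfl
    | cons x w ih =>
      by_cases h0 : x = 0
      · simp [tFun, tInv, h0, ih]
      · simp [tFun, tInv, h0,
          (Function.LeftInverse.iterate (aFun_aInv p) x.val) w]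

end SelfSim

open SelfSim

/-- `sᵢ = r^{aⁱ} = a⁻ⁱ·r·aⁱ` in the generalized Fabrykowski-Gupta group
`Γ_p ≤ Perm(X*)` (indices `i ∈ ℤ/pℤ`). -/
def sFG (p : ℕ) (hp : 3 ≤ p) (i : ZMod p) : Equiv.Perm (List (ZMod p)) :=
  cnj (SelfSim.r p hp) (SelfSim.a p ^ i.val)


section FGAux

open SelfSim

variable {p : ℕ}

/-- A permutation of words that fixes the empty word, preserves the first
letter, and fixes all words whose first letter lies outside `S`. -/
def Good (f : Equiv.Perm (List (ZMod p))) (S : Set (ZMod p)) : Prop :=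
  f [] = [] ∧ (∀ x w, ∃ w', f (x :: w) = x :: w') ∧
    (∀ (x : ZMod p) w, x ∉ S → f (x :: w) = x :: w)

lemma good_one (S : Set (ZMod p)) : Good (1 : Equiv.Perm (List (ZMod p))) S :=
  ⟨rfl, fun x w => ⟨w, rfl⟩, fun _ _ _ => rfl⟩

lemma Good.mul {f g : Equiv.Perm (List (ZMod p))} {S T : Set (ZMod p)}
    (hf : Good f S) (hg : Good g T) : Good (f * g) (S ∪ T) := by
  obtain ⟨hf0, hf1, hf2⟩ := hf
  obtain ⟨hg0, hg1, hg2⟩ := hg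
  refine ⟨by simp [Equiv.Perm.mul_apply, hg0, hf0], ?_, ?_⟩
  · intro x w
    obtain ⟨w1, hw1⟩ := hg1 x w
    obtain ⟨w2, hw2⟩ := hf1 x w1
    exact ⟨w2, by simp [Equiv.Perm.mul_apply, hw1, hw2]⟩
  · intro x w hx
    simp only [Set.mem_union, not_or] at hx
    simp [Equiv.Perm.mul_apply, hg2 x w hx.2, hf2 x w hx.1]

lemma Good.pow {f : Equiv.Perm (List (ZMod p))} {S : Set (ZMod p)}
    (hf : Good f S) (n : ℕ) : Good (f ^ n) S := by
  induction n with
  | zero => simpa using good_one S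
  | succ n ih =>
    have := ih.mul hf
    rw [Set.union_self] at this
    rw [pow_succ]
    exact this

lemma Good.inv {f : Equiv.Perm (List (ZMod p))} {S : Set (ZMod p)}
    (hf : Good f S) : Good f⁻¹ S := by
  obtain ⟨h0, h1, h2⟩ := hf
  refine ⟨f.injective (by rw [Equiv.Perm.coe_inv, Equiv.apply_symm_apply, h0]), ?_, ?_⟩
  · intro x w
    rcases hl : f⁻¹ (x :: w) with _ | ⟨y, w'⟩
    · have : f (f⁻¹ (x :: w)) = x :: w := Equiv.Perm.eq_inv_iff_eq.mp rfl
      rw [hl, h0] at this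
      exact absurd this (by simp)
    · obtain ⟨w'', hw''⟩ := h1 y w'
      have : f (f⁻¹ (x :: w)) = x :: w := Equiv.Perm.eq_inv_iff_eq.mp rfl
      rw [hl, hw''] at this
      injection this with hy _
      subst hy
      exact ⟨w', rfl⟩
  · intro x w hx
    exact f.injective (by rw [Equiv.Perm.coe_inv, Equiv.apply_symm_apply, h2 x w hx])

lemma cnj_apply_s15 (g h : Equiv.Perm (List (ZMod p))) (l : List (ZMod p)) :
    cnj g h l = h⁻¹ (g (h l)) := by
  simp [cnj, Equiv.Perm.mul_apply]

lemma Good.conj {g h : Equiv.Perm (List (ZMod p))} {S T : Set (ZMod p)}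
    (hg : Good g S) (hh : Good h T) : Good (cnj g h) S := by
  obtain ⟨hi0, hi1, hi2⟩ := hh.inv
  obtain ⟨hh0, hh1, hh2⟩ := hh
  obtain ⟨hg0, hg1, hg2⟩ := hg
  refine ⟨by rw [cnj_apply_s15, hh0, hg0, hi0], ?_, ?_⟩
  · intro x w
    obtain ⟨w1, hw1⟩ := hh1 x w
    obtain ⟨w2, hw2⟩ := hg1 x w1
    obtain ⟨w3, hw3⟩ := hi1 x w2
    exact ⟨w3, by rw [cnj_apply_s15, hw1, hw2, hw3]⟩
  · intro x w hx
    obtain ⟨w1, hw1⟩ := hh1 x w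
    rw [cnj_apply_s15, hw1, hg2 x w1 hx, ← hw1, Equiv.Perm.coe_inv, Equiv.symm_apply_apply]

lemma Good.commute {f g : Equiv.Perm (List (ZMod p))} {S T : Set (ZMod p)}
    (hf : Good f S) (hg : Good g T) (hST : Disjoint S T) : f * g = g * f := by
  obtain ⟨hf0, hf1, hf2⟩ := hf
  obtain ⟨hg0, hg1, hg2⟩ := hg
  apply Equiv.ext
  intro l
  rcases l with _ | ⟨x, w⟩
  · simp [Equiv.Perm.mul_apply, hf0, hg0]
  · by_cases hxS : x ∈ S
    · have hxT : x ∉ T := Set.disjoint_left.mp hST hxS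
      obtain ⟨w1, hw1⟩ := hf1 x w
      simp [Equiv.Perm.mul_apply, hg2 x w hxT, hw1, hg2 x w1 hxT]
    · by_cases hxT : x ∈ T
      · obtain ⟨w1, hw1⟩ := hg1 x w
        simp [Equiv.Perm.mul_apply, hf2 x w hxS, hw1, hf2 x w1 hxS]
      · simp [Equiv.Perm.mul_apply, hf2 x w hxS, hg2 x w hxT]

lemma a_apply (x : ZMod p) (w : List (ZMod p)) :
    SelfSim.a p (x :: w) = (x + 1) :: w := rfl

lemma a_nil : SelfSim.a p [] = [] := rfl

lemma a_pow_nil (n : ℕ) : (SelfSim.a p ^ n) [] = [] := by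
  induction n with
  | zero => rfl
  | succ n ih => rw [pow_succ, Equiv.Perm.mul_apply, a_nil, ih]

lemma a_pow_apply (n : ℕ) (x : ZMod p) (w : List (ZMod p)) :
    (SelfSim.a p ^ n) (x :: w) = (x + (n : ZMod p)) :: w := by
  induction n generalizing x with
  | zero => simp
  | succ n ih =>
    rw [pow_succ, Equiv.Perm.mul_apply, a_apply, ih]
    push_cast
    ring_nf

lemma a_pow_inv_nil (n : ℕ) : ((SelfSim.a p ^ n)⁻¹ : Equiv.Perm (List (ZMod p))) [] = [] :=
  (SelfSim.a p ^ n).injective (by rw [Equiv.Perm.coe_inv, Equiv.apply_symm_apply, a_pow_nil])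

lemma a_pow_inv_apply (n : ℕ) (x : ZMod p) (w : List (ZMod p)) :
    ((SelfSim.a p ^ n)⁻¹ : Equiv.Perm (List (ZMod p))) (x :: w) = (x - (n : ZMod p)) :: w :=
  (SelfSim.a p ^ n).injective
    (by rw [Equiv.Perm.coe_inv, Equiv.apply_symm_apply, a_pow_apply, sub_add_cancel])

lemma r_apply (hp : 3 ≤ p) (l : List (ZMod p)) : SelfSim.r p hp l = rFun p l := rfl

lemma rFun_cons (x : ZMod p) (w : List (ZMod p)) :
    rFun p (x :: w) =
      if x = 0 then 0 :: rFun p w else if x = 1 then 1 :: aFun p w else x :: w := rfl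

lemma sFG_nil (hp : 3 ≤ p) (i : ZMod p) : sFG p hp i [] = [] := by
  show ((SelfSim.a p ^ i.val)⁻¹ * SelfSim.r p hp * SelfSim.a p ^ i.val) [] = []
  rw [Equiv.Perm.mul_apply, Equiv.Perm.mul_apply, a_pow_nil, r_apply]
  show ((SelfSim.a p ^ i.val)⁻¹ : Equiv.Perm (List (ZMod p))) [] = []
  exact a_pow_inv_nil i.val

lemma sFG_apply (hp : 3 ≤ p) (i x : ZMod p) (w : List (ZMod p)) :
    sFG p hp i (x :: w) =
      if x = -i then x :: rFun p w
      else if x = 1 - i then x :: aFun p w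
      else x :: w := by
  haveI : NeZero p := ⟨by omega⟩
  have hval : ((i.val : ℕ) : ZMod p) = i := by simp [ZMod.natCast_val, ZMod.cast_id]
  show ((SelfSim.a p ^ i.val)⁻¹ * SelfSim.r p hp * SelfSim.a p ^ i.val) (x :: w) = _
  rw [Equiv.Perm.mul_apply, Equiv.Perm.mul_apply, a_pow_apply, hval, r_apply, rFun_cons]
  by_cases h0 : x + i = 0
  · have hx : x = -i := by linear_combination h0
    rw [if_pos h0, a_pow_inv_apply, hval, if_pos hx, zero_sub, hx]
  · have hx : x ≠ -i := fun h => h0 (by rw [h]; ring)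
    rw [if_neg h0, if_neg hx]
    by_cases h1 : x + i = 1
    · have hx1 : x = 1 - i := by linear_combination h1
      rw [if_pos h1, a_pow_inv_apply, hval, if_pos hx1]
      congr 1
      linear_combination -h1
    · have hx1 : x ≠ 1 - i := fun h => h1 (by rw [h]; ring)
      rw [if_neg h1, if_neg hx1, a_pow_inv_apply, hval]
      congr 1
      ring

lemma good_sFG (hp : 3 ≤ p) (i : ZMod p) :
    Good (sFG p hp i) ({-i, 1 - i} : Set (ZMod p)) := by
  refine ⟨sFG_nil hp i, ?_, ?_⟩
  · intro x w
    rw [sFG_apply]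
    by_cases h0 : x = -i
    · exact ⟨rFun p w, by rw [if_pos h0]⟩
    · by_cases h1 : x = 1 - i
      · exact ⟨aFun p w, by rw [if_neg h0, if_pos h1]⟩
      · exact ⟨w, by rw [if_neg h0, if_neg h1]⟩
  · intro x w hx
    simp only [Set.mem_insert_iff, Set.mem_singleton_iff, not_or] at hx
    rw [sFG_apply, if_neg hx.1, if_neg hx.2]

lemma fg_one_ne_zero (hp : 3 ≤ p) : (1 : ZMod p) ≠ 0 := by
  haveI : NeZero p := ⟨by omega⟩
  have h' : ((1 : ℕ) : ZMod p) ≠ 0 := by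
    rw [Ne, ZMod.natCast_eq_zero_iff]
    intro hd
    have := Nat.le_of_dvd (by norm_num) hd
    omega
  simpa using h'

lemma fg_two_ne_zero (hp : 3 ≤ p) : (2 : ZMod p) ≠ 0 := by
  haveI : NeZero p := ⟨by omega⟩
  have h2 : ((2 : ℕ) : ZMod p) ≠ 0 := by
    rw [Ne, ZMod.natCast_eq_zero_iff]
    intro hd
    have := Nat.le_of_dvd (by norm_num) hd
    omega
  simpa using h2

end FGAux

/-- In the generalized Fabrykowski-Gupta group `Γ_p`, with
`sᵢ = r^{aⁱ}` for `i ∈ ℤ/pℤ`, the following relations hold: `a^p = 1`;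
`[sᵢ^{s_{i-1}ⁿ}, sⱼ^{s_{j-1}^m}] = 1` whenever `2 ≤ |i-j| ≤ p-2`
(equivalently `i - j ∉ {0, 1, -1}` in `ℤ/pℤ`) and `m, n ≥ 0`; and
`sᵢ^{s_{i-1}^{n+1}} = sᵢ^{s_{i-1}ⁿ·s_{i-1}^{s_{i-2}^m}}` for all `i ∈ ℤ/pℤ`
and `m, n ≥ 0`. -/

theorem fabrykowskiGupta_relations (p : ℕ) (hp : 3 ≤ p) :
    SelfSim.a p ^ p = 1 ∧
    (∀ (i j : ZMod p) (n m : ℕ), i - j ≠ 0 → i - j ≠ 1 → i - j ≠ -1 →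
      pbra (cnj (sFG p hp i) (sFG p hp (i - 1) ^ n))
        (cnj (sFG p hp j) (sFG p hp (j - 1) ^ m)) = 1) ∧
    (∀ (i : ZMod p) (n m : ℕ),
      cnj (sFG p hp i) (sFG p hp (i - 1) ^ (n + 1)) =
        cnj (sFG p hp i) (sFG p hp (i - 1) ^ n *
          cnj (sFG p hp (i - 1)) (sFG p hp (i - 2) ^ m))) := by
  haveI : NeZero p := ⟨by omega⟩
  have h1 : (1 : ZMod p) ≠ 0 := fg_one_ne_zero hp
  have h2 : (2 : ZMod p) ≠ 0 := fg_two_ne_zero hp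
  have cnj_mul : ∀ (g u v : Equiv.Perm (List (ZMod p))),
      cnj g (u * v) = cnj (cnj g u) v := by
    intro g u v
    simp only [cnj, mul_inv_rev]
    group
  refine ⟨?_, ?_, ?_⟩
  · -- a ^ p = 1
    apply Equiv.ext
    intro l
    rcases l with _ | ⟨x, w⟩
    · rw [a_pow_nil]; rfl
    · rw [a_pow_apply, ZMod.natCast_self, add_zero]; rfl
  · -- commuting relations
    intro i j n m hij0 hij1 hijm1
    have hGi : Good (cnj (sFG p hp i) (sFG p hp (i - 1) ^ n))
        ({-i, 1 - i} : Set (ZMod p)) :=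
      (good_sFG hp i).conj ((good_sFG hp (i - 1)).pow n)
    have hGj : Good (cnj (sFG p hp j) (sFG p hp (j - 1) ^ m))
        ({-j, 1 - j} : Set (ZMod p)) :=
      (good_sFG hp j).conj ((good_sFG hp (j - 1)).pow m)
    have hdisj : Disjoint ({-i, 1 - i} : Set (ZMod p)) ({-j, 1 - j} : Set (ZMod p)) := by
      rw [Set.disjoint_left]
      intro x hx hx'
      simp only [Set.mem_insert_iff, Set.mem_singleton_iff] at hx hx'
      rcases hx with rfl | rfl <;> rcases hx' with h | h <;>
        first
        | exact hij0 (by linear_combination h)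
        | exact hij0 (by linear_combination -h)
        | exact hij1 (by linear_combination h)
        | exact hij1 (by linear_combination -h)
        | exact hijm1 (by linear_combination h)
        | exact hijm1 (by linear_combination -h)
    have hc := hGi.commute hGj hdisj
    set f := cnj (sFG p hp i) (sFG p hp (i - 1) ^ n) with hf
    set g := cnj (sFG p hp j) (sFG p hp (j - 1) ^ m) with hg
    show f⁻¹ * g⁻¹ * f * g = 1
    calc f⁻¹ * g⁻¹ * f * g = f⁻¹ * g⁻¹ * (f * g) := by group
      _ = f⁻¹ * g⁻¹ * (g * f) := by rw [hc]
      _ = 1 := by group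
  · -- the recursion relation
    intro i n m
    set h1' : Equiv.Perm (List (ZMod p)) := sFG p hp (i - 1) with hh1'
    set h2' : Equiv.Perm (List (ZMod p)) :=
      cnj (sFG p hp (i - 1)) (sFG p hp (i - 2) ^ m) with hh2'
    -- explicit action of h2' on the subtree at 1 - i
    have hS2 : Good (sFG p hp (i - 2) ^ m)
        ({-(i - 2), 1 - (i - 2)} : Set (ZMod p)) := (good_sFG hp (i - 2)).pow m
    have h1i_notS2 : (1 - i : ZMod p) ∉ ({-(i - 2), 1 - (i - 2)} : Set (ZMod p)) := by
      simp only [Set.mem_insert_iff, Set.mem_singleton_iff, not_or]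
      constructor
      · intro h
        first
        | exact h1 (by linear_combination h)
        | exact h1 (by linear_combination -h)
        | exact h2 (by linear_combination h)
        | exact h2 (by linear_combination -h)
      · intro h
        first
        | exact h1 (by linear_combination h)
        | exact h1 (by linear_combination -h)
        | exact h2 (by linear_combination h)
        | exact h2 (by linear_combination -h)
    have hh2app : ∀ w, h2' ((1 - i) :: w) = (1 - i) :: rFun p w := by
      intro w
      rw [hh2', cnj_apply_s15, hS2.2.2 _ w h1i_notS2, sFG_apply,
        if_pos (show (1 - i : ZMod p) = -(i - 1) by ring)]
      exact hS2.inv.2.2 _ (rFun p w) h1i_notS2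
    have hh1app : ∀ w, h1' ((1 - i) :: w) = (1 - i) :: rFun p w := by
      intro w
      rw [hh1', sFG_apply, if_pos (show (1 - i : ZMod p) = -(i - 1) by ring)]
    have hGood1 : Good h1' ({-(i - 1), 1 - (i - 1)} : Set (ZMod p)) := good_sFG hp (i - 1)
    have hGood2 : Good h2' ({-(i - 1), 1 - (i - 1)} : Set (ZMod p)) := hGood1.conj hS2
    -- k = h2' * h1'⁻¹ is supported on the subtree at 2 - i
    have hGoodk : Good (h2' * h1'⁻¹) ({2 - i} : Set (ZMod p)) := by
      obtain ⟨hi0, hi1, hi2⟩ := hGood1.inv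
      obtain ⟨ha0, ha1, ha2⟩ := hGood2
      refine ⟨by rw [Equiv.Perm.mul_apply, hi0, ha0], ?_, ?_⟩
      · intro x w
        obtain ⟨w1, hw1⟩ := hi1 x w
        obtain ⟨w2, hw2⟩ := ha1 x w1
        exact ⟨w2, by rw [Equiv.Perm.mul_apply, hw1, hw2]⟩
      · intro x w hx
        simp only [Set.mem_singleton_iff] at hx
        by_cases hx1 : x = -(i - 1)
        · subst hx1
          obtain ⟨w1, hw1⟩ := hi1 (-(i - 1)) w
          have hap : h1' (h1'⁻¹ ((-(i - 1)) :: w)) = (-(i - 1)) :: w := Equiv.Perm.eq_inv_iff_eq.mp rfl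
          rw [hw1] at hap
          rw [show (-(i - 1) : ZMod p) = 1 - i by ring] at hw1 hap ⊢
          rw [hh1app w1] at hap
          injection hap with _ hww
          rw [Equiv.Perm.mul_apply, hw1, hh2app, hww]
        · have hxS : x ∉ ({-(i - 1), 1 - (i - 1)} : Set (ZMod p)) := by
            simp only [Set.mem_insert_iff, Set.mem_singleton_iff, not_or]
            refine ⟨hx1, fun h => hx ?_⟩
            linear_combination h
          rw [Equiv.Perm.mul_apply, hi2 x w hxS, ha2 x w hxS]
    have hGoodG : Good (cnj (sFG p hp i) (h1' ^ n)) ({-i, 1 - i} : Set (ZMod p)) :=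
      (good_sFG hp i).conj (hGood1.pow n)
    have hdisj : Disjoint ({-i, 1 - i} : Set (ZMod p)) ({2 - i} : Set (ZMod p)) := by
      rw [Set.disjoint_left]
      intro x hx hx'
      simp only [Set.mem_insert_iff, Set.mem_singleton_iff] at hx hx'
      rcases hx with rfl | rfl
      · exact h2 (by linear_combination -hx')
      · exact h1 (by linear_combination -hx')
    have hcomm := hGoodG.commute hGoodk hdisj
    set G : Equiv.Perm (List (ZMod p)) := cnj (sFG p hp i) (h1' ^ n) with hG
    have key : cnj G h1' = cnj G h2' := by
      have hk : (h2' * h1'⁻¹)⁻¹ * G * (h2' * h1'⁻¹) = G := by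
        rw [mul_assoc, hcomm, ← mul_assoc, inv_mul_cancel, one_mul]
      calc cnj G h1' = h1'⁻¹ * ((h2' * h1'⁻¹)⁻¹ * G * (h2' * h1'⁻¹)) * h1' := by
            rw [hk]; rfl
        _ = cnj G h2' := by simp only [cnj, mul_inv_rev]; group
    calc cnj (sFG p hp i) (sFG p hp (i - 1) ^ (n + 1))
        = cnj (sFG p hp i) (h1' ^ n * h1') := by rw [← hh1', pow_succ]
      _ = cnj G h1' := by rw [cnj_mul, hG]
      _ = cnj G h2' := key
      _ = _ := by rw [hG, ← cnj_mul]
end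

section
/- In Γ^p, let i, j, k ∈ ℤ/pℤ be pairwise distinct and let ℓ ∈ ℤ/pℤ satisfy ℓ = (j−i)(i−k)/(2(j−k)) in ℤ/pℤ. Then σ_{i,ℓ} = σᵢ·[σᵢ^{1/2}·σⱼ^{(k−i)/(2(j−k))}, σ_k^{(i−j)/(2(j−k))}·σᵢ^{1/2}]^{-1}, where fractional exponents are computed in ℤ/pℤ (this is meaningful since all the σ's have order dividing p). -/
/-- The generator `τ` of `Γ`. -/
def τΓ (p : ℕ) : Gam p := PresentedGroup.of 1

/-- `τᵢ ∈ Γ^p`: the element whose `i`-th coordinate is `τ`, others trivial. -/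
def τt (p : ℕ) (i : ZMod p) : ZMod p → Gam p := Pi.mulSingle i (τΓ p)

/-- `σᵢ = τᵢ·α_{i+1}·α_{i+2}²···α_{i+k}^k···α_{i-1}^{p-1} ∈ Γ^p`
(indices mod `p`): the element of `Γ^p` whose `i`-th coordinate is `τ` and
whose `(i+k)`-th coordinate is `α^k` for `1 ≤ k ≤ p-1`. -/
def σg (p : ℕ) (i : ZMod p) : ZMod p → Gam p :=
  fun x => if x = i then τΓ p else αΓ p ^ (x - i).val

/-- `σ_{i,n} = σᵢ^{αᵢⁿ} = αᵢ⁻ⁿ·σᵢ·αᵢⁿ ∈ Γ^p`, with the exponent `n` read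
modulo `p`. -/
def σgn (p : ℕ) (i n : ZMod p) : ZMod p → Gam p :=
  (αt p i ^ n.val)⁻¹ * σg p i * αt p i ^ n.val


lemma alpha_pow (p : ℕ) : αΓ p ^ p = 1 := by
  have h : (FreeGroup.of 0 ^ p : FreeGroup (Fin 2)) ∈ Subgroup.normalClosure (CpCpRels p) :=
    Subgroup.subset_normalClosure (Set.mem_insert _ _)
  show (PresentedGroup.of (rels := CpCpRels p) 0) ^ p = 1
  rw [PresentedGroup.of, ← map_pow]
  exact (QuotientGroup.eq_one_iff _).2 h

lemma tau_pow (p : ℕ) : τΓ p ^ p = 1 := by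
  have h : (FreeGroup.of 1 ^ p : FreeGroup (Fin 2)) ∈ Subgroup.normalClosure (CpCpRels p) :=
    Subgroup.subset_normalClosure (Set.mem_insert_of_mem _ rfl)
  show (PresentedGroup.of (rels := CpCpRels p) 1) ^ p = 1
  rw [PresentedGroup.of, ← map_pow]
  exact (QuotientGroup.eq_one_iff _).2 h

lemma σg_self (p : ℕ) (i : ZMod p) : σg p i i = τΓ p := if_pos rfl

lemma σg_ne (p : ℕ) {i x : ZMod p} (h : x ≠ i) : σg p i x = αΓ p ^ (x - i).val := if_neg h

section
variable {G : Type*} [Group G] {p : ℕ} [NeZero p] {g : G}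

lemma vadd (hg : g ^ p = 1) (a b : ZMod p) : g ^ a.val * g ^ b.val = g ^ (a+b).val := by
  rw [← pow_add, ZMod.val_add, ← pow_eq_pow_mod _ hg]

omit [NeZero p] in
lemma vmul (hg : g ^ p = 1) (a b : ZMod p) : (g ^ a.val) ^ b.val = g ^ (a*b).val := by
  rw [← pow_mul, ZMod.val_mul, ← pow_eq_pow_mod _ hg]

lemma vinv (hg : g ^ p = 1) (a : ZMod p) : (g ^ a.val)⁻¹ = g ^ (-a).val := by
  rw [inv_eq_iff_mul_eq_one, vadd hg, add_neg_cancel, ZMod.val_zero, pow_zero]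

end

lemma key_i {G : Type*} [Group G] (τ t x y : G) (ht : t * t = τ) (hy : y = x⁻¹) :
    x⁻¹ * τ * x = τ * ((t*x)⁻¹ * (y*t)⁻¹ * (t*x) * (y*t))⁻¹ := by
  subst hy; rw [← ht]; group; rw [zpow_two, ← mul_assoc]

/-- In `Γ^p`, let `i, j, k ∈ ℤ/pℤ` be pairwise distinct
and let `ℓ ∈ ℤ/pℤ` satisfy `ℓ = (j−i)(i−k)/(2(j−k))` in `ℤ/pℤ`.  Then
`σ_{i,ℓ} = σᵢ·[σᵢ^{1/2}·σⱼ^{(k−i)/(2(j−k))}, σ_k^{(i−j)/(2(j−k))}·σᵢ^{1/2}]⁻¹`,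
the fractional exponents being computed in `ℤ/pℤ` (meaningful since all the
`σ`'s have order dividing `p`). -/
theorem guptaSidki_sigma_il_identity
    (p : ℕ) (hp : p.Prime) (ho : Odd p)
    (i j k : ZMod p) (hij : i ≠ j) (hik : i ≠ k) (hjk : j ≠ k)
    (l : ZMod p) (hl : l = (j - i) * (i - k) * (2 * (j - k))⁻¹) :
    σgn p i l =
      σg p i *
        (pbra
          (σg p i ^ ((2 : ZMod p)⁻¹).val *
            σg p j ^ ((k - i) * (2 * (j - k))⁻¹).val)
          (σg p k ^ ((i - j) * (2 * (j - k))⁻¹).val *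
            σg p i ^ ((2 : ZMod p)⁻¹).val))⁻¹ := by
  haveI : Fact p.Prime := ⟨hp⟩
  haveI : NeZero p := ⟨hp.ne_zero⟩
  haveI : Fact (1 < p) := ⟨hp.one_lt⟩
  have hα := alpha_pow p
  have hτ := tau_pow p
  have hp2 : p ≠ 2 := by rintro rfl; simp [Nat.odd_iff] at ho
  have h2 : (2 : ZMod p) ≠ 0 := by
    intro h
    have hd : p ∣ 2 := by
      have := (ZMod.natCast_eq_zero_iff 2 p).1 (by exact_mod_cast h)
      exact this
    exact hp2 ((Nat.prime_dvd_prime_iff_eq hp Nat.prime_two).1 hd)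
  have hjk' : (j - k : ZMod p) ≠ 0 := sub_ne_zero_of_ne hjk
  have h2jk : (2 * (j - k) : ZMod p) ≠ 0 := mul_ne_zero h2 hjk'
  funext x
  simp only [σgn, αt, Pi.mul_apply, Pi.inv_apply, Pi.pow_apply, pbra]
  by_cases hxi : x = i
  · rw [hxi, σg_self, σg_ne p hij, σg_ne p hik, Pi.mulSingle_eq_same]
    rw [vmul hα, vmul hα]
    have hm : ((i-j) * ((k-i) * (2*(j-k))⁻¹) : ZMod p) = l := by
      rw [hl]; field_simp; ring
    have hn : ((i-k) * ((i-j) * (2*(j-k))⁻¹) : ZMod p) = -l := by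
      rw [hl]; field_simp; ring
    rw [hm, hn]
    refine key_i (τΓ p) (τΓ p ^ ((2:ZMod p)⁻¹).val) (αΓ p ^ l.val) (αΓ p ^ (-l).val) ?_ ?_
    · rw [vadd hτ, ← two_mul, mul_inv_cancel₀ h2, ZMod.val_one, pow_one]
    · exact (vinv hα l).symm
  · by_cases hxj : x = j
    · rw [hxj, σg_self, σg_ne p (Ne.symm hij), σg_ne p hjk,
        Pi.mulSingle_eq_of_ne (hxj ▸ hxi), one_pow, inv_one, one_mul, mul_one]
      rw [vmul hα, vmul hα, vadd hα]
      have hz : ((j-k) * ((i-j) * (2*(j-k))⁻¹) + (j-i) * (2:ZMod p)⁻¹ : ZMod p) = 0 := by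
        field_simp; ring
      rw [hz, ZMod.val_zero, pow_zero]
      symm; rw [mul_eq_left, inv_eq_one]; group
    · by_cases hxk : x = k
      · rw [hxk, σg_self, σg_ne p (Ne.symm hik), σg_ne p (Ne.symm hjk),
          Pi.mulSingle_eq_of_ne (hxk ▸ hxi), one_pow, inv_one, one_mul, mul_one]
        rw [vmul hα, vmul hα, vadd hα]
        have hz : ((k-i) * (2:ZMod p)⁻¹ + (k-j) * ((k-i) * (2*(j-k))⁻¹) : ZMod p) = 0 := by
          field_simp; ring
        rw [hz, ZMod.val_zero, pow_zero]
        symm; rw [mul_eq_left, inv_eq_one]; group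
      · rw [σg_ne p hxi, σg_ne p hxj, σg_ne p hxk,
          Pi.mulSingle_eq_of_ne hxi, one_pow, inv_one, one_mul, mul_one]
        rw [vmul hα, vmul hα, vmul hα]
        symm; rw [mul_eq_left, inv_eq_one]; group
end
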